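/- arXiv:1104.3832 — 6 statements merged into one kernel-verified Lean document; each statement's English description precedes it below -/
import Mathlib

section
/- Let Tl ∈ (0,+∞], let ψ : ℝ × [0,Tl) → ℝ be continuous with continuous partial derivative ∂ψ/∂s, and let s₀ ∈ ℝ. Let W, R : [0,Tl) → ℝ be continuous with d₊W/dt(t) ≤ ψ(W(t),t) for all t ∈ [0,Tl) and W(0) ≤ s₀, and d⁺R/dt(t) ≥ ψ(R(t),t) for all t ∈ [0,Tl) and R(0) ≥ s₀. Let Ts ∈ (0,Tl] and let S : [0,Ts) → ℝ be a C¹ function with S'(t) = ψ(S(t),t) for all t ∈ [0,Ts), S(0) = s₀, and with the maximality property that if Ts < +∞ then S is unbounded on (Ts − η, Ts) for every η ∈ (0,Ts]. Then Ts = Tl, and W(t) ≤ S(t) ≤ R(t) for all t ∈ [0,Tl). -/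
open Filter Set

/-- Right upper Dini derivative: `limsup_{h → 0⁺} (f(t+h) − f(t))/h`, valued in `EReal`. -/
noncomputable def diniUpper (f : ℝ → ℝ) (t : ℝ) : EReal :=
  limsup (fun h : ℝ => (((f (t + h) - f t) / h : ℝ) : EReal)) (nhdsWithin 0 (Ioi 0))

/-- Right lower Dini derivative: `liminf_{h → 0⁺} (f(t+h) − f(t))/h`, valued in `EReal`. -/
noncomputable def diniLower (f : ℝ → ℝ) (t : ℝ) : EReal :=
  liminf (fun h : ℝ => (((f (t + h) - f t) / h : ℝ) : EReal)) (nhdsWithin 0 (Ioi 0))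

open scoped Topology

lemma tendsto_addLeft_nhdsGT (x : ℝ) :
    Tendsto (fun h : ℝ => x + h) (𝓝[>] (0:ℝ)) (𝓝[>] x) := by
  apply tendsto_nhdsWithin_of_tendsto_nhds_of_eventually_within
  · have : Tendsto (fun h : ℝ => x + h) (𝓝 (0:ℝ)) (𝓝 (x + 0)) :=
      ((continuous_const.add continuous_id).tendsto 0)
    simpa using this.mono_left nhdsWithin_le_nhds
  · filter_upwards [self_mem_nhdsWithin] with h hh
    exact lt_add_of_pos_right x hh

lemma slope_add_eq (f : ℝ → ℝ) (x h : ℝ) :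
    slope f x (x + h) = (f (x + h) - f x) / h := by
  rw [slope_def_field]
  congr 1
  ring

lemma freq_of_diniLower_le {f : ℝ → ℝ} {x c : ℝ}
    (h : diniLower f x ≤ ((c : ℝ) : EReal)) (r : ℝ) (hr : c < r) :
    ∃ᶠ z in 𝓝[>] x, slope f x z < r := by
  by_contra hcon
  rw [Filter.not_frequently] at hcon
  have hev : ∀ᶠ h' in 𝓝[>] (0:ℝ),
      ((r : ℝ) : EReal) ≤ (((f (x + h') - f x) / h' : ℝ) : EReal) := by
    filter_upwards [(tendsto_addLeft_nhdsGT x).eventually hcon] with h' h1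
    rw [EReal.coe_le_coe_iff]
    have := not_lt.mp h1
    rwa [slope_add_eq] at this
  have h2 : ((r : ℝ) : EReal) ≤ diniLower f x := by
    have := Filter.liminf_le_liminf hev
    rwa [Filter.liminf_const] at this
  exact absurd (EReal.coe_le_coe_iff.mp (h2.trans h)) (not_le.mpr hr)

lemma freq_of_diniUpper_ge {f : ℝ → ℝ} {x c : ℝ}
    (h : ((c : ℝ) : EReal) ≤ diniUpper f x) (r : ℝ) (hr : -c < r) :
    ∃ᶠ z in 𝓝[>] x, slope (fun y => -f y) x z < r := by
  by_contra hcon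
  rw [Filter.not_frequently] at hcon
  have hev : ∀ᶠ h' in 𝓝[>] (0:ℝ),
      (((f (x + h') - f x) / h' : ℝ) : EReal) ≤ ((-r : ℝ) : EReal) := by
    filter_upwards [(tendsto_addLeft_nhdsGT x).eventually hcon] with h' h1
    rw [EReal.coe_le_coe_iff]
    have h2 := not_lt.mp h1
    rw [slope_add_eq] at h2
    have : (-f (x + h') - -f x) / h' = -((f (x + h') - f x) / h') := by ring
    rw [this] at h2
    linarith
  have h2 : diniUpper f x ≤ ((-r : ℝ) : EReal) := by
    have := Filter.limsup_le_limsup hev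
    rwa [Filter.limsup_const] at this
  have := EReal.coe_le_coe_iff.mp (h.trans h2)
  linarith

lemma comp_aux {b : ℝ} (φ : ℝ → ℝ → ℝ) {f g : ℝ → ℝ}
    (hf : ContinuousOn f (Icc 0 b))
    (hfreq : ∀ x ∈ Ico 0 b, ∀ r, φ (f x) x < r → ∃ᶠ z in 𝓝[>] x, slope f x z < r)
    (hgc : ContinuousOn g (Icc 0 b))
    (hg' : ∀ x ∈ Ico 0 b, HasDerivWithinAt g (φ (g x) x) (Ici x) x)
    {L : ℝ} (hL : 0 < L)
    (hLip : ∀ x ∈ Ico 0 b, ∀ s, |s - g x| ≤ 1 → φ s x - φ (g x) x ≤ L * |s - g x|)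
    (h0 : f 0 ≤ g 0) : ∀ x ∈ Icc 0 b, f x ≤ g x := by
  have key : ∀ ε : ℝ, 0 < ε → ε ≤ Real.exp (-(2 * L * b)) →
      ∀ x ∈ Icc 0 b, f x ≤ g x + ε * Real.exp (2 * L * x) := by
    intro ε hε hε' x hx
    have hband : ∀ y ∈ Icc (0:ℝ) b, ε * Real.exp (2 * L * y) ≤ 1 := by
      intro y hy
      have h1 : ε * Real.exp (2 * L * y) ≤
          Real.exp (-(2 * L * b)) * Real.exp (2 * L * y) :=
        mul_le_mul_of_nonneg_right hε' (Real.exp_pos _).le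
      have h2 : Real.exp (-(2 * L * b)) * Real.exp (2 * L * y) =
          Real.exp (-(2 * L * b) + 2 * L * y) := (Real.exp_add _ _).symm
      have h3 : Real.exp (-(2 * L * b) + 2 * L * y) ≤ Real.exp 0 := by
        apply Real.exp_le_exp.mpr
        nlinarith [hy.2, hL]
      rw [Real.exp_zero] at h3
      linarith [h1, h2 ▸ h3]
    have hBd : ∀ y : ℝ, HasDerivAt (fun z => ε * Real.exp (2 * L * z))
        (ε * (2 * L * Real.exp (2 * L * y))) y := by
      intro y
      have h1 : HasDerivAt (fun z : ℝ => 2 * L * z) (2 * L) y := by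
        simpa using (hasDerivAt_id y).const_mul (2 * L)
      have := (h1.exp).const_mul ε
      simpa [mul_comm, mul_left_comm, mul_assoc] using this
    refine image_le_of_liminf_slope_right_lt_deriv_boundary' (f := f)
      (f' := fun y => φ (f y) y) (a := 0) (b := b) hf hfreq
      (B := fun y => g y + ε * Real.exp (2 * L * y))
      (B' := fun y => φ (g y) y + ε * (2 * L * Real.exp (2 * L * y)))
      ?_ ?_ ?_ ?_ hx
    · show f 0 ≤ g 0 + ε * Real.exp (2 * L * 0)
      have : (0:ℝ) < ε * Real.exp (2 * L * 0) := by positivity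
      linarith
    · exact hgc.add (Continuous.continuousOn (by continuity))
    · intro y hy
      exact (hg' y hy).add ((hBd y).hasDerivWithinAt)
    · intro y hy hfy
      have hmem : y ∈ Icc (0:ℝ) b := Ico_subset_Icc_self hy
      have habs : |f y - g y| = ε * Real.exp (2 * L * y) := by
        rw [hfy]
        have : (0:ℝ) < ε * Real.exp (2 * L * y) := by positivity
        rw [show g y + ε * Real.exp (2 * L * y) - g y = ε * Real.exp (2 * L * y) by ring,
          abs_of_pos this]
      have hle1 : |f y - g y| ≤ 1 := by rw [habs]; exact hband y hmem
      have := hLip y hy (f y) hle1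
      rw [habs] at this
      have hpos : (0:ℝ) < L * (ε * Real.exp (2 * L * y)) := by positivity
      have : φ (f y) y < φ (g y) y + 2 * (L * (ε * Real.exp (2 * L * y))) := by linarith
      calc φ (f y) y < φ (g y) y + 2 * (L * (ε * Real.exp (2 * L * y))) := this
        _ = φ (g y) y + ε * (2 * L * Real.exp (2 * L * y)) := by ring
  intro x hx
  by_contra hlt
  push_neg at hlt
  set c := f x - g x with hc
  have hc0 : 0 < c := by simp [hc]; linarith
  have hE : (0:ℝ) < Real.exp (2 * L * x) := Real.exp_pos _
  set ε := min (Real.exp (-(2 * L * b))) (c / (2 * Real.exp (2 * L * x))) with hεdef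
  have hεpos : 0 < ε := lt_min (Real.exp_pos _) (by positivity)
  have h1 := key ε hεpos (min_le_left _ _) x hx
  have h2 : ε * Real.exp (2 * L * x) ≤ c / 2 := by
    have := min_le_right (Real.exp (-(2 * L * b))) (c / (2 * Real.exp (2 * L * x)))
    have h3 : ε * Real.exp (2 * L * x) ≤ (c / (2 * Real.exp (2 * L * x))) * Real.exp (2 * L * x) :=
      mul_le_mul_of_nonneg_right this hE.le
    have h4 : (c / (2 * Real.exp (2 * L * x))) * Real.exp (2 * L * x) = c / 2 := by
      field_simp
    rw [h4] at h3
    exact h3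
  linarith

/-- Lemma A.3 of the paper: if a lower solution `W` and an upper solution `R` of the
differential inequality exist on all of `[0,Tl)`, then the maximal solution `S` of the
Cauchy problem is global (`Ts = Tl`) and `W ≤ S ≤ R` on `[0,Tl)`. -/
theorem stmt2 (Tl Ts : EReal) (hTl : 0 < Tl) (hTs : 0 < Ts) (hTsTl : Ts ≤ Tl)
    (ψ ψ' : ℝ → ℝ → ℝ) (s₀ : ℝ)
    (hψc : ContinuousOn (fun p : ℝ × ℝ => ψ p.1 p.2)
      (univ ×ˢ {t : ℝ | 0 ≤ t ∧ (t : EReal) < Tl}))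
    (hψd : ∀ s : ℝ, ∀ t : ℝ, 0 ≤ t → (t : EReal) < Tl →
      HasDerivAt (fun s' => ψ s' t) (ψ' s t) s)
    (hψ'c : ContinuousOn (fun p : ℝ × ℝ => ψ' p.1 p.2)
      (univ ×ˢ {t : ℝ | 0 ≤ t ∧ (t : EReal) < Tl}))
    (W R S : ℝ → ℝ)
    (hWc : ContinuousOn W {t : ℝ | 0 ≤ t ∧ (t : EReal) < Tl})
    (hRc : ContinuousOn R {t : ℝ | 0 ≤ t ∧ (t : EReal) < Tl})
    (hW : ∀ t : ℝ, 0 ≤ t → (t : EReal) < Tl → diniLower W t ≤ ((ψ (W t) t : ℝ) : EReal))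
    (hW0 : W 0 ≤ s₀)
    (hR : ∀ t : ℝ, 0 ≤ t → (t : EReal) < Tl → ((ψ (R t) t : ℝ) : EReal) ≤ diniUpper R t)
    (hR0 : s₀ ≤ R 0)
    (hS : ∀ t : ℝ, 0 ≤ t → (t : EReal) < Ts →
      HasDerivWithinAt S (ψ (S t) t) {τ : ℝ | 0 ≤ τ ∧ (τ : EReal) < Ts} t)
    (hS0 : S 0 = s₀)
    (hSmax : Ts ≠ ⊤ → ∀ η : ℝ, 0 < η → (η : EReal) ≤ Ts →
      ¬ ∃ M : ℝ, ∀ t ∈ Ioo (Ts.toReal - η) Ts.toReal, |S t| ≤ M) :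
    Ts = Tl ∧ ∀ t : ℝ, 0 ≤ t → (t : EReal) < Tl → W t ≤ S t ∧ S t ≤ R t := by
  have hTl' : {t : ℝ | 0 ≤ t ∧ (t : EReal) < Ts} ⊆ {t : ℝ | 0 ≤ t ∧ (t : EReal) < Tl} :=
    fun t ht => ⟨ht.1, lt_of_lt_of_le ht.2 hTsTl⟩
  have key : ∀ t : ℝ, 0 ≤ t → (t : EReal) < Ts → W t ≤ S t ∧ S t ≤ R t := by
    intro t₀ ht₀0 ht₀Ts
    obtain ⟨T', hT'1, hT'2⟩ := EReal.lt_iff_exists_real_btwn.mp ht₀Ts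
    rw [EReal.coe_lt_coe_iff] at hT'1
    have hsub : Icc 0 t₀ ⊆ {τ : ℝ | 0 ≤ τ ∧ (τ : EReal) < Ts} := fun τ hτ =>
      ⟨hτ.1, lt_of_le_of_lt (EReal.coe_le_coe_iff.mpr hτ.2) ht₀Ts⟩
    have hsubl : Icc 0 t₀ ⊆ {τ : ℝ | 0 ≤ τ ∧ (τ : EReal) < Tl} := fun τ hτ => hTl' (hsub hτ)
    have hIco : Ico (0:ℝ) t₀ ⊆ Icc (0:ℝ) t₀ := Ico_subset_Icc_self
    have hSc : ContinuousOn S (Icc 0 t₀) := fun x hx =>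
      ((hS x (hsub hx).1 (hsub hx).2).continuousWithinAt).mono hsub
    obtain ⟨C, hC⟩ := (isCompact_Icc : IsCompact (Icc (0:ℝ) t₀)).exists_bound_of_continuousOn hSc
    have hC0 : 0 ≤ C := le_trans (norm_nonneg _) (hC 0 (left_mem_Icc.mpr ht₀0))
    have hDcomp : IsCompact ((Icc (-(C+1)) (C+1)) ×ˢ Icc (0:ℝ) t₀) :=
      isCompact_Icc.prod isCompact_Icc
    obtain ⟨L₀, hL₀⟩ := hDcomp.exists_bound_of_continuousOn
      (hψ'c.mono (fun p hp => ⟨mem_univ _, hsubl hp.2⟩))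
    set L := |L₀| + 1 with hLdef
    have hL : 0 < L := by positivity
    have hlip : ∀ x ∈ Icc (0:ℝ) t₀, ∀ s₁ ∈ Icc (-(C+1)) (C+1), ∀ s₂ ∈ Icc (-(C+1)) (C+1),
        |ψ s₁ x - ψ s₂ x| ≤ L * |s₁ - s₂| := by
      intro x hx s₁ h1 s₂ h2
      have hmv := Convex.norm_image_sub_le_of_norm_hasDerivWithin_le
        (f := fun u => ψ u x) (f' := fun u => ψ' u x) (C := L) (s := Icc (-(C+1)) (C+1))
        (fun u _ => (hψd u x (hsubl hx).1 (hsubl hx).2).hasDerivWithinAt)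
        (fun u hu => by
          have h3 := hL₀ (u, x) ⟨hu, hx⟩
          simp only [Real.norm_eq_abs] at h3 ⊢
          calc |ψ' u x| ≤ L₀ := h3
            _ ≤ |L₀| + 1 := by linarith [le_abs_self L₀])
        (convex_Icc _ _) h2 h1
      simpa [Real.norm_eq_abs, hLdef] using hmv
    have hSC : ∀ x ∈ Icc (0:ℝ) t₀, -C ≤ S x ∧ S x ≤ C := by
      intro x hx
      have h1 := hC x hx
      rw [Real.norm_eq_abs, abs_le] at h1
      exact h1
    have hSD : ∀ x ∈ Icc (0:ℝ) t₀, S x ∈ Icc (-(C+1)) (C+1) := by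
      intro x hx
      obtain ⟨h1, h2⟩ := hSC x hx
      exact ⟨by linarith, by linarith⟩
    have hg'S : ∀ x ∈ Ico (0:ℝ) t₀, HasDerivWithinAt S (ψ (S x) x) (Ici x) x := by
      intro x hx
      have hmem : {τ : ℝ | 0 ≤ τ ∧ (τ : EReal) < Ts} ∈ 𝓝[Ici x] x := by
        rw [mem_nhdsWithin]
        refine ⟨Iio T', isOpen_Iio, lt_trans hx.2 hT'1, fun τ hτ => ?_⟩
        exact ⟨le_trans hx.1 hτ.2, lt_trans (EReal.coe_lt_coe_iff.mpr hτ.1) hT'2⟩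
      exact (hS x (hsub (hIco hx)).1 (hsub (hIco hx)).2).mono_of_mem_nhdsWithin hmem
    have hWS : ∀ x ∈ Icc (0:ℝ) t₀, W x ≤ S x := by
      refine comp_aux ψ (hWc.mono hsubl) ?_ hSc hg'S hL ?_ (by rw [hS0]; exact hW0)
      · intro x hx r hr
        exact freq_of_diniLower_le (hW x (hsubl (hIco hx)).1 (hsubl (hIco hx)).2) r hr
      · intro x hx s hs
        have h1 := abs_le.mp hs
        have h2 := hSC x (hIco hx)
        have hsD : s ∈ Icc (-(C+1)) (C+1) := by
          constructor <;> [linarith [h1.1, h2.1]; linarith [h1.2, h2.2]]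
        calc ψ s x - ψ (S x) x ≤ |ψ s x - ψ (S x) x| := le_abs_self _
          _ ≤ L * |s - S x| := hlip x (hIco hx) s hsD (S x) (hSD x (hIco hx))
    have hSR : ∀ x ∈ Icc (0:ℝ) t₀, S x ≤ R x := by
      have hneg : ∀ x ∈ Icc (0:ℝ) t₀, -R x ≤ -S x := by
        refine comp_aux (fun s x => -ψ (-s) x) (f := fun y => -R y) (g := fun y => -S y)
          ((hRc.mono hsubl).neg) ?_ (hSc.neg) ?_ hL ?_ (by simp only [neg_le_neg_iff]; rw [hS0]; exact hR0)
        · intro x hx r hr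
          simp only [neg_neg] at hr
          exact freq_of_diniUpper_ge (hR x (hsubl (hIco hx)).1 (hsubl (hIco hx)).2) r hr
        · intro x hx
          have h1 := (hg'S x hx).neg
          simp only [neg_neg]
          exact h1
        · intro x hx s hs
          simp only [neg_neg]
          have hs' : |(-s) - S x| ≤ 1 := by
            rw [show (-s) - S x = -(s - -S x) by ring, abs_neg]; exact hs
          have h1 := abs_le.mp hs'
          have h2 := hSC x (hIco hx)
          have hsD : -s ∈ Icc (-(C+1)) (C+1) := by
            constructor <;> [linarith [h1.1, h2.1]; linarith [h1.2, h2.2]]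
          have h3 := hlip x (hIco hx) (S x) (hSD x (hIco hx)) (-s) hsD
          have h4 : |S x - -s| = |s - -S x| := by
            rw [show S x - -s = -(-s - S x) by ring, abs_neg,
              show (-s) - S x = -(s - -S x) by ring, abs_neg]
          calc -ψ (-s) x - -ψ (S x) x = ψ (S x) x - ψ (-s) x := by ring
            _ ≤ |ψ (S x) x - ψ (-s) x| := le_abs_self _
            _ ≤ L * |S x - -s| := h3
            _ = L * |s - -S x| := by rw [h4]
      intro x hx
      linarith [hneg x hx]
    exact ⟨hWS t₀ (right_mem_Icc.mpr ht₀0), hSR t₀ (right_mem_Icc.mpr ht₀0)⟩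
  have hTseq : Ts = Tl := by
    rcases eq_or_lt_of_le hTsTl with h | h
    · exact h
    · exfalso
      have hne : Ts ≠ ⊤ := by
        intro hh
        rw [hh] at h
        exact absurd h (by simp)
      have hnb : Ts ≠ ⊥ := by
        intro hh
        rw [hh] at hTs
        exact absurd hTs (by simp)
      set T := Ts.toReal with hTdef
      have hcoe : (T : EReal) = Ts := EReal.coe_toReal hne hnb
      have hT0 : 0 < T := by
        have h1 : ((0:ℝ) : EReal) < (T : EReal) := by
          rw [hcoe, EReal.coe_zero]; exact hTs
        exact EReal.coe_lt_coe_iff.mp h1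
      have hsubT : Icc (0:ℝ) T ⊆ {t : ℝ | 0 ≤ t ∧ (t : EReal) < Tl} := fun τ hτ =>
        ⟨hτ.1, lt_of_le_of_lt ((EReal.coe_le_coe_iff.mpr hτ.2).trans_eq hcoe) h⟩
      obtain ⟨CW, hCW⟩ := isCompact_Icc.exists_bound_of_continuousOn (hWc.mono hsubT)
      obtain ⟨CR, hCR⟩ := isCompact_Icc.exists_bound_of_continuousOn (hRc.mono hsubT)
      apply hSmax hne T hT0 (le_of_eq hcoe)
      refine ⟨max CW CR, fun t ht => ?_⟩
      have ht1 : 0 < t := by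
        have := ht.1
        linarith [sub_self T]
      have htT : t < T := ht.2
      have htTs : (t : EReal) < Ts := by
        rw [← hcoe]; exact EReal.coe_lt_coe_iff.mpr htT
      obtain ⟨hWt, hRt⟩ := key t ht1.le htTs
      have h1 := hCW t ⟨ht1.le, htT.le⟩
      have h2 := hCR t ⟨ht1.le, htT.le⟩
      rw [Real.norm_eq_abs, abs_le] at h1 h2
      rw [abs_le]
      constructor
      · linarith [le_max_left CW CR, h1.1]
      · linarith [le_max_right CW CR, h2.2]
  refine ⟨hTseq, fun t ht0 htTl => key t ht0 ?_⟩
  rw [hTseq]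
  exact htTl
end

section
/- Let H be a real inner product space with inner product ⟨·,·⟩ and norm ‖·‖, let T ∈ (0,+∞], and let w : [0,T) → H be differentiable with derivative w'. Let ν ∈ [0,∞), g ∈ [0,∞), δ ∈ [0,∞), and let a, ε : [0,T) → [0,∞) be continuous functions such that for every t ∈ [0,T): ⟨w'(t), w(t)⟩ ≤ −ν‖w(t)‖² + a(t)‖w(t)‖² + g‖w(t)‖³ + ε(t)‖w(t)‖, and ‖w'(t)‖ ≤ ε(t) whenever w(t) = 0; assume also ‖w(0)‖ ≤ δ. Let Tc ∈ (0,T] and let R : [0,Tc) → [0,∞) be continuous with d⁺R/dt(t) ≥ −νR(t) + a(t)R(t) + gR(t)² + ε(t) for all t ∈ [0,Tc) and R(0) ≥ δ. Then ‖w(t)‖ ≤ R(t) for all t ∈ [0,Tc). -/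
open Filter Set

lemma map_addLeft_nhdsGT (x : ℝ) :
    Filter.map (fun h : ℝ => x + h) (nhdsWithin 0 (Ioi 0)) = nhdsWithin x (Ioi x) := by
  have h := (Homeomorph.addLeft x).isEmbedding.map_nhdsWithin_eq (Ioi (0 : ℝ)) 0
  simpa [image_const_add_Ioi] using h

/-- From a lower bound on the Dini upper derivative, get frequent lower bounds on slopes. -/
lemma freq_slope_of_diniUpper {R : ℝ → ℝ} {x c : ℝ} (h : (c : EReal) < diniUpper R x) :
    ∃ᶠ z in nhdsWithin x (Ioi x), c < slope R x z := by
  have hfreq : ∃ᶠ t in nhdsWithin (0 : ℝ) (Ioi 0),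
      (c : EReal) < (((R (x + t) - R x) / t : ℝ) : EReal) :=
    frequently_lt_of_lt_limsup (by isBoundedDefault) h
  rw [← map_addLeft_nhdsGT x, frequently_map]
  refine hfreq.mono fun t ht => ?_
  have ht' : c < (R (x + t) - R x) / t := by exact_mod_cast ht
  simpa [slope_def_field, add_sub_cancel_left] using ht'

/-- Slopes of a difference: combine an eventual upper bound on slopes of `φ` with a frequent
lower bound on slopes of `R`. -/
lemma freq_slope_sub {φ R : ℝ → ℝ} {x r K₁ K₂ : ℝ}
    (h1 : ∀ᶠ z in nhdsWithin x (Ioi x), slope φ x z < K₁)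
    (h2 : ∃ᶠ z in nhdsWithin x (Ioi x), K₂ < slope R x z) (hr : K₁ - K₂ ≤ r) :
    ∃ᶠ z in nhdsWithin x (Ioi x), slope (fun t => φ t - R t) x z < r := by
  refine (h2.and_eventually h1).mono fun z hz => ?_
  have hs : slope (fun t => φ t - R t) x z = slope φ x z - slope R x z := by
    simp only [slope_def_field]
    ring
  rw [hs]
  have := hz.1
  have := hz.2
  linarith

set_option maxHeartbeats 2000000 in
/-- Quantitative core of Proposition 4.4 of the paper: any nonnegative continuous
solution `R` of the control inequalities bounds `‖w(t)‖` on `[0,Tc)`. -/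
theorem stmt4 {H : Type*} [NormedAddCommGroup H] [InnerProductSpace ℝ H]
    (T : EReal) (hT : 0 < T) (w w' : ℝ → H)
    (hw : ∀ t : ℝ, 0 ≤ t → (t : EReal) < T →
      HasDerivWithinAt w (w' t) {τ : ℝ | 0 ≤ τ ∧ (τ : EReal) < T} t)
    (ν g δ : ℝ) (hν : 0 ≤ ν) (hg : 0 ≤ g) (hδ : 0 ≤ δ) (a ε : ℝ → ℝ)
    (ha : ∀ t : ℝ, 0 ≤ t → (t : EReal) < T → 0 ≤ a t)
    (hε : ∀ t : ℝ, 0 ≤ t → (t : EReal) < T → 0 ≤ ε t)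
    (hac : ContinuousOn a {t : ℝ | 0 ≤ t ∧ (t : EReal) < T})
    (hεc : ContinuousOn ε {t : ℝ | 0 ≤ t ∧ (t : EReal) < T})
    (hineq : ∀ t : ℝ, 0 ≤ t → (t : EReal) < T →
      (inner ℝ (w' t) (w t) : ℝ) ≤
        -ν * ‖w t‖ ^ 2 + a t * ‖w t‖ ^ 2 + g * ‖w t‖ ^ 3 + ε t * ‖w t‖)
    (hzero : ∀ t : ℝ, 0 ≤ t → (t : EReal) < T → w t = 0 → ‖w' t‖ ≤ ε t)
    (hw0 : ‖w 0‖ ≤ δ)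
    (Tc : EReal) (hTc : 0 < Tc) (hTcT : Tc ≤ T) (R : ℝ → ℝ)
    (hRc : ContinuousOn R {t : ℝ | 0 ≤ t ∧ (t : EReal) < Tc})
    (hRnn : ∀ t : ℝ, 0 ≤ t → (t : EReal) < Tc → 0 ≤ R t)
    (hR : ∀ t : ℝ, 0 ≤ t → (t : EReal) < Tc →
      ((-ν * R t + a t * R t + g * R t ^ 2 + ε t : ℝ) : EReal) ≤ diniUpper R t)
    (hR0 : δ ≤ R 0) :
    ∀ t : ℝ, 0 ≤ t → (t : EReal) < Tc → ‖w t‖ ≤ R t := by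
  intro t₁ ht₁0 ht₁Tc
  by_contra hcon
  push_neg at hcon
  -- basic domain facts
  set sT : Set ℝ := {τ : ℝ | 0 ≤ τ ∧ (τ : EReal) < T} with hsT
  have hmemTc : ∀ x ∈ Icc 0 t₁, 0 ≤ x ∧ (x : EReal) < Tc := by
    intro x hx
    refine ⟨hx.1, lt_of_le_of_lt ?_ ht₁Tc⟩
    exact_mod_cast hx.2
  have hmemT : ∀ x ∈ Icc 0 t₁, x ∈ sT := by
    intro x hx
    exact ⟨hx.1, lt_of_lt_of_le (hmemTc x hx).2 hTcT⟩
  have hsubTc : Icc 0 t₁ ⊆ {t : ℝ | 0 ≤ t ∧ (t : EReal) < Tc} := fun x hx => hmemTc x hx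
  -- continuity of φ := ‖w ·‖ and R on [0, t₁]
  set φ : ℝ → ℝ := fun t => ‖w t‖ with hφ
  have hφc : ContinuousOn φ (Icc 0 t₁) := by
    intro x hx
    have := ((hw x (hmemT x hx).1 (hmemT x hx).2).continuousWithinAt).norm
    exact this.mono fun z hz => hmemT z hz
  have hRc' : ContinuousOn R (Icc 0 t₁) := hRc.mono hsubTc
  have hac' : ContinuousOn a (Icc 0 t₁) := hac.mono fun x hx => hmemT x hx
  -- bounds on [0, t₁]
  obtain ⟨Cφ, hCφ⟩ := isCompact_Icc.exists_bound_of_continuousOn hφc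
  obtain ⟨CR, hCR⟩ := isCompact_Icc.exists_bound_of_continuousOn hRc'
  obtain ⟨Ca, hCa⟩ := isCompact_Icc.exists_bound_of_continuousOn hac'
  set M : ℝ := max Cφ (max CR 0) with hM
  set A : ℝ := max Ca 0 with hA
  have hMφ : ∀ x ∈ Icc 0 t₁, φ x ≤ M := fun x hx =>
    le_trans (le_trans (le_abs_self _) (hCφ x hx)) (le_max_left _ _)
  have hMR : ∀ x ∈ Icc 0 t₁, R x ≤ M := fun x hx =>
    le_trans (le_trans (le_abs_self _) (hCR x hx))
      (le_trans (le_max_left _ _) (le_max_right _ _))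
  have hAa : ∀ x ∈ Icc 0 t₁, a x ≤ A := fun x hx =>
    le_trans (le_trans (le_abs_self _) (hCa x hx)) (le_max_left _ _)
  have hA0 : 0 ≤ A := le_max_right _ _
  have hM0 : 0 ≤ M := le_trans (le_max_right _ _) (le_max_right _ _)
  set L : ℝ := A + 2 * g * M with hL
  have hL0 : 0 ≤ L := by positivity
  -- the comparison function B
  have hu1 : 0 < φ t₁ - R t₁ := by simpa [hφ] using sub_pos.2 hcon
  set lam : ℝ := (φ t₁ - R t₁) / (2 * Real.exp ((L + 1) * (t₁ - 0))) with hlam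
  have hlam0 : 0 < lam := by
    apply div_pos hu1
    positivity
  set B : ℝ → ℝ := fun t => lam * Real.exp ((L + 1) * (t - 0)) with hB
  have hB' : ∀ x : ℝ, HasDerivAt B ((L + 1) * B x) x := by
    intro x
    have h1 : HasDerivAt (fun t : ℝ => (L + 1) * (t - 0)) (L + 1) x := by
      simpa using ((hasDerivAt_id x).sub_const (0 : ℝ)).const_mul (L + 1)
    have h2 := h1.exp
    have h3 := h2.const_mul lam
    have hBx : (L + 1) * B x = lam * (Real.exp ((L + 1) * (x - 0)) * (L + 1)) := by
      show (L + 1) * (lam * Real.exp ((L + 1) * (x - 0))) = _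
      ring
    rw [hBx]
    exact h3
  have hBpos : ∀ x : ℝ, 0 < B x := fun x => by positivity
  -- the Dini-type bound function f'
  set fR : ℝ → ℝ := fun x => -ν * R x + a x * R x + g * R x ^ 2 + ε x with hfR
  set fφ : ℝ → ℝ := fun x => -ν * φ x + a x * φ x + g * φ x ^ 2 + ε x with hfφ
  set f' : ℝ → ℝ := fun x =>
    if R x < φ x then L * (φ x - R x) else ‖w' x‖ + 1 - fR x with hf'def
  -- main slope estimate
  have hf' : ∀ x ∈ Ico 0 t₁, ∀ r, f' x < r →
      ∃ᶠ z in nhdsWithin x (Ioi x), slope (fun t => φ t - R t) x z < r := by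
    intro x hx r hr
    have hxIcc : x ∈ Icc 0 t₁ := ⟨hx.1, le_of_lt hx.2⟩
    have hx0 : 0 ≤ x := hx.1
    have hxT : (x : EReal) < T := (hmemT x hxIcc).2
    have hxTc : (x : EReal) < Tc := (hmemTc x hxIcc).2
    -- the right-neighborhood filter is inside the domain
    have hIoo : Ioo x t₁ ∈ nhdsWithin x (Ioi x) := Ioo_mem_nhdsGT_of_mem ⟨le_refl x, hx.2⟩
    have hsub : Ioo x t₁ ⊆ sT \ {x} := by
      intro z hz
      refine ⟨hmemT z ⟨le_trans hx0 (le_of_lt hz.1), le_of_lt hz.2⟩, ?_⟩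
      exact fun h => absurd h.symm (ne_of_lt hz.1)
    have hle : nhdsWithin x (Ioi x) ≤ nhdsWithin x (sT \ {x}) :=
      nhdsWithin_le_iff.2 (mem_of_superset hIoo hsub)
    have hle2 : nhdsWithin x (Ioi x) ≤ nhdsWithin x sT :=
      nhdsWithin_le_iff.2 (mem_of_superset hIoo fun z hz => (hsub hz).1)
    have hwx := hw x hx0 hxT
    -- frequent lower bound for slopes of R
    have hfreqR : ∀ c : ℝ, c < fR x → ∃ᶠ z in nhdsWithin x (Ioi x), c < slope R x z := by
      intro c hc
      apply freq_slope_of_diniUpper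
      calc (c : EReal) < (fR x : EReal) := by exact_mod_cast hc
        _ ≤ diniUpper R x := hR x hx0 hxTc
    by_cases hlt : R x < φ x
    · -- here `w x ≠ 0` and the norm is differentiable
      rw [hf'def] at hr
      simp only [if_pos hlt] at hr
      have hφpos : 0 < φ x := lt_of_le_of_lt (hRnn x hx0 hxTc) hlt
      have hwx0 : w x ≠ 0 := fun h => by simp [hφ, h] at hφpos
      -- Lipschitz-type estimate
      have hlip : fφ x - fR x ≤ L * (φ x - R x) := by
        have h1 : a x ≤ A := hAa x hxIcc
        have h2 : φ x ≤ M := hMφ x hxIcc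
        have h3 : R x ≤ M := hMR x hxIcc
        have h4 : 0 ≤ R x := hRnn x hx0 hxTc
        have h5 : R x < φ x := hlt
        simp only [hfφ, hfR, hL]
        nlinarith [mul_le_mul_of_nonneg_right (h1 : a x ≤ A) (le_of_lt (sub_pos.2 h5)),
          mul_nonneg hν (le_of_lt (sub_pos.2 h5)),
          mul_le_mul_of_nonneg_left (add_le_add h2 h3) hg,
          mul_nonneg hg (le_of_lt (sub_pos.2 h5))]
      -- slope of φ tends to inner (w x) (w' x) / ‖w x‖
      have hTsq : Tendsto (slope (fun t => ‖w t‖ ^ 2) x) (nhdsWithin x (Ioi x))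
          (nhds (2 * (inner ℝ (w x) (w' x) : ℝ))) :=
        (hasDerivWithinAt_iff_tendsto_slope.1 hwx.norm_sq).mono_left hle
      have hTw : Tendsto w (nhdsWithin x (Ioi x)) (nhds (w x)) :=
        (hwx.continuousWithinAt).mono_left hle2
      have hTsum : Tendsto (fun z => ‖w z‖ + ‖w x‖) (nhdsWithin x (Ioi x))
          (nhds (‖w x‖ + ‖w x‖)) := (hTw.norm).add tendsto_const_nhds
      have hsumne : (‖w x‖ + ‖w x‖) ≠ 0 := by positivity
      have hTdiv : Tendsto (fun z => slope (fun t => ‖w t‖ ^ 2) x z / (‖w z‖ + ‖w x‖))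
          (nhdsWithin x (Ioi x))
          (nhds (2 * (inner ℝ (w x) (w' x) : ℝ) / (‖w x‖ + ‖w x‖))) :=
        hTsq.div hTsum hsumne
      have heq : ∀ᶠ z in nhdsWithin x (Ioi x),
          slope (fun t => ‖w t‖ ^ 2) x z / (‖w z‖ + ‖w x‖) = slope φ x z := by
        filter_upwards [self_mem_nhdsWithin] with z hz
        have hzx : z - x ≠ 0 := sub_ne_zero.2 (ne_of_gt hz)
        have hzs : (0:ℝ) < ‖w z‖ + ‖w x‖ := by positivity
        simp only [slope_def_field, hφ]
        field_simp
        ring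
      have hTφ : Tendsto (slope φ x) (nhdsWithin x (Ioi x))
          (nhds (2 * (inner ℝ (w x) (w' x) : ℝ) / (‖w x‖ + ‖w x‖))) :=
        hTdiv.congr' heq
      -- limit is at most fφ x
      have hD : 2 * (inner ℝ (w x) (w' x) : ℝ) / (‖w x‖ + ‖w x‖) ≤ fφ x := by
        have hi := hineq x hx0 hxT
        rw [real_inner_comm] at hi
        rw [div_le_iff₀ (by positivity : (0:ℝ) < ‖w x‖ + ‖w x‖)]
        simp only [hfφ, hφ]
        nlinarith [hi]
      -- choose η
      have hfr : fφ x - fR x < r := lt_of_le_of_lt hlip hr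
      set η : ℝ := (r - (fφ x - fR x)) / 2 with hη
      have hη0 : 0 < η := by
        rw [hη]
        have h0 : (0:ℝ) < r - (fφ x - fR x) := by linarith
        exact div_pos h0 two_pos
      have h1 : ∀ᶠ z in nhdsWithin x (Ioi x), slope φ x z < fφ x + η :=
        hTφ.eventually_lt_const (by linarith)
      have h2 : ∃ᶠ z in nhdsWithin x (Ioi x), fR x - η < slope R x z :=
        hfreqR _ (by linarith)
      exact freq_slope_sub h1 h2 (by simp only [hη]; linarith)
    · -- crude bound case
      rw [hf'def] at hr
      simp only [if_neg hlt] at hr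
      set η : ℝ := r - (‖w' x‖ + 1 - fR x) with hη
      have hη0 : 0 < η := by simp only [hη]; linarith
      -- eventually slope φ < ‖w' x‖ + 1
      have hTw : Tendsto (slope w x) (nhdsWithin x (Ioi x)) (nhds (w' x)) :=
        (hasDerivWithinAt_iff_tendsto_slope.1 hwx).mono_left hle
      have h1' : ∀ᶠ z in nhdsWithin x (Ioi x), ‖slope w x z‖ < ‖w' x‖ + 1 :=
        hTw.norm.eventually_lt_const (by linarith)
      have h1 : ∀ᶠ z in nhdsWithin x (Ioi x), slope φ x z < ‖w' x‖ + 1 := by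
        filter_upwards [h1', self_mem_nhdsWithin] with z hz hz'
        refine lt_of_le_of_lt ?_ hz
        have hzx : (0:ℝ) < z - x := sub_pos.2 hz'
        have : slope φ x z ≤ ‖w z - w x‖ / (z - x) := by
          rw [slope_def_field]
          have hnum : φ z - φ x ≤ ‖w z - w x‖ := by
            simp only [hφ]
            exact norm_sub_norm_le _ _
          exact div_le_div_of_nonneg_right hnum hzx.le
        refine le_trans this (le_of_eq ?_)
        rw [slope]
        rw [norm_smul]
        rw [norm_inv, Real.norm_eq_abs, abs_of_pos hzx, div_eq_inv_mul]
        rfl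
      have h2 : ∃ᶠ z in nhdsWithin x (Ioi x), fR x - η < slope R x z :=
        hfreqR _ (by linarith)
      exact freq_slope_sub h1 h2 (by simp only [hη]; linarith)
  -- apply the fencing theorem
  have hcont : ContinuousOn (fun t => φ t - R t) (Icc 0 t₁) := hφc.sub hRc'
  have hstart : φ 0 - R 0 ≤ B 0 := by
    have : φ 0 ≤ R 0 := le_trans hw0 hR0
    have := hBpos 0
    linarith
  have hbound : ∀ x ∈ Ico 0 t₁, φ x - R x = B x → f' x < (L + 1) * B x := by
    intro x hx hxeq
    have hBx := hBpos x
    have hux : 0 < φ x - R x := hxeq ▸ hBx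
    have hlt : R x < φ x := sub_pos.1 hux
    rw [hf'def]
    simp only [if_pos hlt, hxeq]
    nlinarith [hBx]
  have hfinal : φ t₁ - R t₁ ≤ B t₁ :=
    image_le_of_liminf_slope_right_lt_deriv_boundary hcont hf' hstart hB' hbound
      (right_mem_Icc.2 ht₁0)
  have hBt₁ : B t₁ = (φ t₁ - R t₁) / 2 := by
    have hepos : (0:ℝ) < Real.exp ((L + 1) * (t₁ - 0)) := Real.exp_pos _
    rw [hB, hlam]
    field_simp
  rw [hBt₁] at hfinal
  linarith
end

section
/- Let ν ∈ [0,∞), g ∈ (0,∞), r₀ ∈ [0,∞). Define Tc ∈ (0,+∞] as follows: Tc := +∞ if ν > 0 and r₀ ≤ ν/g; Tc := −(1/ν)·log(1 − ν/(g·r₀)) if ν > 0 and r₀ > ν/g; Tc := 1/(g·r₀) if ν = 0 and r₀ > 0; Tc := +∞ if ν = 0 and r₀ = 0. Then for every t ∈ [0,Tc) one has 1 − g·r₀·e_ν(t) > 0, and the function R : [0,Tc) → [0,∞) defined by R(t) := r₀·e^{−νt}/(1 − g·r₀·e_ν(t)) is C¹, satisfies R(0) = r₀, and satisfies R'(t)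 = −ν·R(t) + g·R(t)² for all t ∈ [0,Tc). -/
open Set

/-- `e_ν(t) := (1 − e^{−νt})/ν` for `ν > 0`, and `e_0(t) := t`. -/
noncomputable def eNu (ν t : ℝ) : ℝ :=
  if ν = 0 then t else (1 - Real.exp (-ν * t)) / ν

/-- The critical time of Lemma 5.1 of the paper. -/
noncomputable def Tc5 (ν g r₀ : ℝ) : EReal :=
  if ν = 0 then
    (if r₀ = 0 then ⊤ else ((1 / (g * r₀) : ℝ) : EReal))
  else if r₀ ≤ ν / g then ⊤
  else ((-(1 / ν) * Real.log (1 - ν / (g * r₀)) : ℝ) : EReal)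

lemma eNu_hasDerivAt (ν t : ℝ) : HasDerivAt (eNu ν) (Real.exp (-ν * t)) t := by
  unfold eNu
  rcases eq_or_ne ν 0 with h | h
  · simp only [h, if_true, neg_zero, zero_mul, Real.exp_zero]
    simpa using hasDerivAt_id' t
  · simp only [h, if_false]
    have h1 : HasDerivAt (fun τ : ℝ => -ν * τ) (-ν) t := by
      simpa using (hasDerivAt_id t).const_mul (-ν)
    have h2 : HasDerivAt (fun τ : ℝ => Real.exp (-ν * τ)) (Real.exp (-ν * t) * (-ν)) t :=
      (Real.hasDerivAt_exp _).comp t h1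
    have h3 : HasDerivAt (fun τ : ℝ => 1 - Real.exp (-ν * τ)) (0 - Real.exp (-ν * t) * (-ν)) t :=
      (hasDerivAt_const t 1).sub h2
    have := h3.div_const ν
    exact this.congr_deriv (by rw [div_eq_iff h]; ring)

lemma denom_pos (ν g r₀ : ℝ) (hν : 0 ≤ ν) (hg : 0 < g) (hr : 0 ≤ r₀)
    (t : ℝ) (ht : 0 ≤ t) (hT : (t : EReal) < Tc5 ν g r₀) :
    0 < 1 - g * r₀ * eNu ν t := by
  unfold Tc5 at hT
  unfold eNu
  rcases eq_or_ne ν 0 with h | h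
  · simp only [h, if_true] at hT ⊢
    rcases eq_or_ne r₀ 0 with hr0 | hr0
    · simp [hr0]
    · simp only [hr0, if_false] at hT
      have ht' : t < 1 / (g * r₀) := by exact_mod_cast hT
      have hgr : 0 < g * r₀ := mul_pos hg (lt_of_le_of_ne hr (Ne.symm hr0))
      nlinarith [(lt_div_iff₀ hgr).mp ht']
  · have hν' : 0 < ν := lt_of_le_of_ne hν (Ne.symm h)
    simp only [h, if_false] at hT ⊢
    have hexp : 0 < Real.exp (-ν * t) := Real.exp_pos _
    by_cases hcase : r₀ ≤ ν / g
    · -- g r₀ ≤ ν, so g r₀ (1 - e^{-νt})/ν ≤ 1 - e^{-νt} < 1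
      have hgr : g * r₀ ≤ ν := by
        have := (le_div_iff₀ hg).mp hcase
        linarith
      have h1 : Real.exp (-ν * t) ≤ 1 := by
        apply Real.exp_le_one_iff.mpr
        nlinarith
      have : g * r₀ * ((1 - Real.exp (-ν * t)) / ν) ≤ 1 - Real.exp (-ν * t) := by
        rw [div_eq_mul_inv, ← mul_assoc]
        have h2 : 0 ≤ 1 - Real.exp (-ν * t) := by linarith
        calc g * r₀ * (1 - Real.exp (-ν * t)) * ν⁻¹
            ≤ ν * (1 - Real.exp (-ν * t)) * ν⁻¹ := by
              apply mul_le_mul_of_nonneg_right _ (by positivity)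
              exact mul_le_mul_of_nonneg_right hgr h2
          _ = 1 - Real.exp (-ν * t) := by field_simp
      linarith
    · simp only [hcase, if_false] at hT
      push_neg at hcase
      have hr0 : 0 < r₀ := lt_trans (by positivity) hcase
      have hgr : 0 < g * r₀ := mul_pos hg hr0
      have hA : 0 < 1 - ν / (g * r₀) := by
        have : ν / (g * r₀) < 1 := by
          rw [div_lt_one hgr]
          nlinarith [(div_lt_iff₀ hg).mp hcase]
        linarith
      have ht' : t < -(1 / ν) * Real.log (1 - ν / (g * r₀)) := by exact_mod_cast hT
      -- so -ν t > log A, exp(-νt) > A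
      have hlog : Real.log (1 - ν / (g * r₀)) < -ν * t := by
        have := mul_lt_mul_of_pos_left ht' hν'
        rw [← mul_assoc] at this
        have hνν : ν * -(1 / ν) = -1 := by field_simp
        rw [hνν] at this
        linarith
      have hexpA : 1 - ν / (g * r₀) < Real.exp (-ν * t) := by
        calc 1 - ν / (g * r₀) = Real.exp (Real.log (1 - ν / (g * r₀))) := (Real.exp_log hA).symm
          _ < Real.exp (-ν * t) := Real.exp_lt_exp.mpr hlog
      -- g r₀ (1-e)/ν < 1 ⟺ 1 - e < ν/(g r₀) ⟺ 1 - ν/(g r₀) < e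
      have : g * r₀ * ((1 - Real.exp (-ν * t)) / ν) < 1 := by
        rw [mul_div_assoc', div_lt_one hν']
        have hdiv : ν / (g * r₀) * (g * r₀) = ν := div_mul_cancel₀ _ (ne_of_gt hgr)
        nlinarith
      linarith

/-- Lemma 5.1(ii) of the paper: the explicit solution
`R(t) = r₀ e^{−νt}/(1 − g r₀ e_ν(t))` of the control equation
`R' = −νR + gR²`, `R(0) = r₀`, on `[0,Tc)`. -/
theorem stmt5 (ν g r₀ : ℝ) (hν : 0 ≤ ν) (hg : 0 < g) (hr : 0 ≤ r₀) :
    (∀ t : ℝ, 0 ≤ t → (t : EReal) < Tc5 ν g r₀ → 0 < 1 - g * r₀ * eNu ν t) ∧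
    r₀ * Real.exp (-ν * 0) / (1 - g * r₀ * eNu ν 0) = r₀ ∧
    (∀ t : ℝ, 0 ≤ t → (t : EReal) < Tc5 ν g r₀ →
      0 ≤ r₀ * Real.exp (-ν * t) / (1 - g * r₀ * eNu ν t) ∧
      HasDerivWithinAt (fun τ => r₀ * Real.exp (-ν * τ) / (1 - g * r₀ * eNu ν τ))
        (-ν * (r₀ * Real.exp (-ν * t) / (1 - g * r₀ * eNu ν t))
          + g * (r₀ * Real.exp (-ν * t) / (1 - g * r₀ * eNu ν t)) ^ 2)
        {τ : ℝ | 0 ≤ τ ∧ (τ : EReal) < Tc5 ν g r₀} t) := by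
  refine ⟨denom_pos ν g r₀ hν hg hr, ?_, ?_⟩
  · have h0 : eNu ν 0 = 0 := by unfold eNu; split <;> simp
    simp [h0]
  · intro t ht hT
    have hden := denom_pos ν g r₀ hν hg hr t ht hT
    constructor
    · positivity
    · have hN : HasDerivAt (fun τ : ℝ => r₀ * Real.exp (-ν * τ))
          (r₀ * (Real.exp (-ν * t) * (-ν))) t := by
        have h1 : HasDerivAt (fun τ : ℝ => -ν * τ) (-ν) t := by
          simpa using (hasDerivAt_id t).const_mul (-ν)
        exact ((Real.hasDerivAt_exp _).comp t h1).const_mul r₀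
      have hD : HasDerivAt (fun τ : ℝ => 1 - g * r₀ * eNu ν τ)
          (0 - g * r₀ * Real.exp (-ν * t)) t :=
        (hasDerivAt_const t 1).sub ((eNu_hasDerivAt ν t).const_mul (g * r₀))
      have hdiv := hN.div hD (ne_of_gt hden)
      have := hdiv.hasDerivWithinAt (s := {τ : ℝ | 0 ≤ τ ∧ (τ : EReal) < Tc5 ν g r₀})
      have hd := ne_of_gt hden
      refine this.congr_deriv ?_
      field_simp
      ring
end

section
/- Let ν ∈ [0,∞), g ∈ (0,∞), r₀ ∈ [0,∞). Define Tc ∈ (0,+∞] as follows: Tc := +∞ if ν > 0 and r₀ ≤ ν/g; Tc := −(1/ν)·log(1 − ν/(g·r₀)) if ν > 0 and r₀ > ν/g; Tc := 1/(g·r₀) if ν = 0 and r₀ > 0; Tc := +∞ if ν = 0 and r₀ = 0. Let T ∈ (0,+∞] and let W : [0,T) → [0,∞) be a continuous function with W(0) ≤ r₀ and d₊W/dt(t) ≤ −ν·W(t) + g·W(t)² for all t ∈ [0,T). Then for every t ∈ [0, min(T,Tc)) one has W(t) ≤ r₀·e^{−νt}/(1 − g·r₀·e_ν(t)). -/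
open Filter Set

lemma eNu_zero (ν : ℝ) : eNu ν 0 = 0 := by
  unfold eNu
  split <;> simp

lemma hasDerivAt_eNu (ν s : ℝ) : HasDerivAt (eNu ν) (Real.exp (-ν * s)) s := by
  rcases eq_or_ne ν 0 with h | h
  · have hfun : eNu ν = fun t : ℝ => t := by funext t; simp [eNu, h]
    rw [hfun, h]
    simpa using hasDerivAt_id' s
  · have hfun : eNu ν = fun t : ℝ => (1 - Real.exp (-ν * t)) / ν := by
      funext t; simp [eNu, h]
    have h1 : HasDerivAt (fun t : ℝ => -ν * t) (-ν) s := by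
      simpa using (hasDerivAt_id s).const_mul (-ν)
    have h3 := (h1.exp.const_sub 1).div_const ν
    rw [hfun]
    refine h3.congr_deriv ?_
    field_simp

lemma eNu_mono {ν : ℝ} (hν : 0 ≤ ν) {s t : ℝ} (h : s ≤ t) : eNu ν s ≤ eNu ν t := by
  rcases eq_or_ne ν 0 with h0 | h0
  · simpa [eNu, h0] using h
  · have hp : 0 < ν := lt_of_le_of_ne hν (Ne.symm h0)
    simp only [eNu, if_neg h0]
    have hexp : Real.exp (-ν * t) ≤ Real.exp (-ν * s) :=
      Real.exp_le_exp.2 (by nlinarith)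
    gcongr


lemma diniLower_frequently {W : ℝ → ℝ} {x r : ℝ} (h : diniLower W x < (r : EReal)) :
    ∃ᶠ z in nhdsWithin x (Ioi x), slope W x z < r := by
  have h1 : ∃ᶠ hh in nhdsWithin (0:ℝ) (Ioi 0),
      (((W (x + hh) - W x) / hh : ℝ) : EReal) < (r : EReal) :=
    frequently_lt_of_liminf_lt (by isBoundedDefault) h
  have hmap : Filter.map (fun h : ℝ => x + h) (nhdsWithin (0:ℝ) (Ioi 0))
      = nhdsWithin x (Ioi x) := by
    simpa using (Homeomorph.addLeft x).isEmbedding.map_nhdsWithin_eq (Ioi 0) 0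
  rw [← hmap, frequently_map]
  refine h1.mono fun hh hlt => ?_
  have hlt' : (W (x + hh) - W x) / hh < r := by exact_mod_cast hlt
  rw [slope_def_field]
  simpa using hlt'

noncomputable def compD (ν g r₀ s : ℝ) : ℝ := 1 - g * r₀ * eNu ν s

noncomputable def compR (ν g r₀ s : ℝ) : ℝ := r₀ * Real.exp (-ν * s) / compD ν g r₀ s

lemma compR_zero (ν g r₀ : ℝ) : compR ν g r₀ 0 = r₀ := by
  simp [compR, compD, eNu_zero]

lemma hasDerivAt_compD (ν g r₀ s : ℝ) :
    HasDerivAt (compD ν g r₀) (-(g * r₀ * Real.exp (-ν * s))) s := by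
  have := ((hasDerivAt_eNu ν s).const_mul (g * r₀)).const_sub 1
  exact this

lemma hasDerivAt_compR (ν g r₀ s : ℝ) (hs : compD ν g r₀ s ≠ 0) :
    HasDerivAt (compR ν g r₀)
      (-ν * compR ν g r₀ s + g * compR ν g r₀ s ^ 2) s := by
  have h1 : HasDerivAt (fun t : ℝ => -ν * t) (-ν) s := by
    simpa using (hasDerivAt_id s).const_mul (-ν)
  have hN : HasDerivAt (fun u : ℝ => r₀ * Real.exp (-ν * u))
      (r₀ * (Real.exp (-ν * s) * (-ν))) s := h1.exp.const_mul r₀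
  have hdiv := hN.div (hasDerivAt_compD ν g r₀ s) hs
  have hfun : compR ν g r₀ = fun u => r₀ * Real.exp (-ν * u) / compD ν g r₀ u := rfl
  rw [hfun]
  refine hdiv.congr_deriv ?_
  simp only [compR]
  field_simp
  ring

/-- Scalar quantitative content of Proposition 5.2 of the paper: any nonnegative
continuous subsolution of `W' ≤ −νW + gW²` with `W(0) ≤ r₀` is bounded by
`r₀ e^{−νt}/(1 − g r₀ e_ν(t))` up to time `min(T, Tc)`. -/
theorem stmt6 (ν g r₀ : ℝ) (hν : 0 ≤ ν) (hg : 0 < g) (hr : 0 ≤ r₀)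
    (T : EReal) (hT : 0 < T) (W : ℝ → ℝ)
    (hWc : ContinuousOn W {t : ℝ | 0 ≤ t ∧ (t : EReal) < T})
    (hWnn : ∀ t : ℝ, 0 ≤ t → (t : EReal) < T → 0 ≤ W t)
    (hW0 : W 0 ≤ r₀)
    (hW : ∀ t : ℝ, 0 ≤ t → (t : EReal) < T →
      diniLower W t ≤ ((-ν * W t + g * W t ^ 2 : ℝ) : EReal)) :
    ∀ t : ℝ, 0 ≤ t → (t : EReal) < min T (Tc5 ν g r₀) →
      W t ≤ r₀ * Real.exp (-ν * t) / (1 - g * r₀ * eNu ν t) := by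
  intro t₀ ht₀ htlt
  rw [lt_min_iff] at htlt
  obtain ⟨htT, htc⟩ := htlt
  -- positivity of the denominator at t₀
  have hDt₀ : 0 < compD ν g r₀ t₀ := by
    rcases eq_or_ne ν 0 with h0 | h0
    · subst h0
      rcases eq_or_ne r₀ 0 with hr0 | hr0
      · simp [compD, hr0]
      · have hr0' : 0 < r₀ := lt_of_le_of_ne hr (Ne.symm hr0)
        have htc' : (t₀ : EReal) < ((1 / (g * r₀) : ℝ) : EReal) := by
          simpa [Tc5, hr0] using htc
        have ht' : t₀ < 1 / (g * r₀) := by exact_mod_cast htc'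
        have hgr : 0 < g * r₀ := by positivity
        have : g * r₀ * t₀ < 1 := by
          rw [lt_div_iff₀ hgr] at ht'; nlinarith
        simp only [compD, eNu, if_pos]
        linarith
    · have hν' : 0 < ν := lt_of_le_of_ne hν (Ne.symm h0)
      have hexle : Real.exp (-ν * t₀) ≤ 1 := Real.exp_le_one_iff.2 (by nlinarith)
      have hexpos : 0 < Real.exp (-ν * t₀) := Real.exp_pos _
      have key : g * r₀ * (1 - Real.exp (-ν * t₀)) < ν := by
        by_cases hcase : r₀ ≤ ν / g
        · have hgr : g * r₀ ≤ ν := by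
            have := (le_div_iff₀ hg).1 hcase; nlinarith
          nlinarith
        · push_neg at hcase
          have hνg : 0 < ν / g := by positivity
          have hr0' : 0 < r₀ := lt_trans hνg hcase
          have hgr0 : 0 < g * r₀ := by positivity
          have hfrac : ν / (g * r₀) < 1 := by
            rw [div_lt_one hgr0]
            have := (div_lt_iff₀ hg).1 hcase; nlinarith
          have hfracpos : 0 < ν / (g * r₀) := by positivity
          have hcpos : 0 < 1 - ν / (g * r₀) := by linarith
          simp only [Tc5, if_neg h0, if_neg (not_le.2 hcase)] at htc
          have ht' : t₀ < -(1 / ν) * Real.log (1 - ν / (g * r₀)) := by exact_mod_cast htc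
          have hm := mul_lt_mul_of_pos_left ht' hν'
          have h5 : ν * (-(1 / ν) * Real.log (1 - ν / (g * r₀)))
              = -Real.log (1 - ν / (g * r₀)) := by field_simp
          have hlog : Real.log (1 - ν / (g * r₀)) < -ν * t₀ := by
            rw [h5] at hm; linarith
          have hE : 1 - ν / (g * r₀) < Real.exp (-ν * t₀) :=
            (Real.log_lt_iff_lt_exp hcpos).1 hlog
          have : (1 - Real.exp (-ν * t₀)) * (g * r₀) < ν := by
            have h2 : 1 - Real.exp (-ν * t₀) < ν / (g * r₀) := by linarith
            rw [← lt_div_iff₀ hgr0]; linarith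
          nlinarith
      simp only [compD, eNu, if_neg h0]
      have : g * r₀ * ((1 - Real.exp (-ν * t₀)) / ν) < 1 := by
        rw [← mul_div_assoc, div_lt_one hν']; exact key
      linarith
  have hDpos : ∀ s ∈ Icc (0:ℝ) t₀, 0 < compD ν g r₀ s := by
    intro s hs
    have hmono := eNu_mono hν hs.2
    have hgr : 0 ≤ g * r₀ := by positivity
    have : g * r₀ * eNu ν s ≤ g * r₀ * eNu ν t₀ := by nlinarith
    simp only [compD] at hDt₀ ⊢
    linarith
  -- continuity and boundedness of R on [0, t₀]
  have hRcont : ContinuousOn (compR ν g r₀) (Icc 0 t₀) := fun s hs =>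
    ((hasDerivAt_compR ν g r₀ s (ne_of_gt (hDpos s hs))).continuousAt).continuousWithinAt
  obtain ⟨sM, hsM, hMx⟩ := isCompact_Icc.exists_isMaxOn ⟨0, le_refl 0, ht₀⟩ hRcont
  have hM : ∀ s ∈ Icc (0:ℝ) t₀, compR ν g r₀ s ≤ compR ν g r₀ sM := fun s hs => hMx hs
  set M := compR ν g r₀ sM with hMdef
  have hM0 : 0 ≤ M := by
    have := hM 0 ⟨le_refl 0, ht₀⟩
    rw [compR_zero] at this
    linarith
  set K := g * (2 * M + 1) + 1 with hKdef
  have hK : 0 < K := by positivity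
  have hsub : Icc (0:ℝ) t₀ ⊆ {t : ℝ | 0 ≤ t ∧ (t : EReal) < T} := by
    intro s hs
    refine ⟨hs.1, lt_of_le_of_lt ?_ htT⟩
    exact_mod_cast hs.2
  -- the main ε-perturbed comparison
  have main : ∀ ε : ℝ, 0 < ε → ε * Real.exp (K * t₀) ≤ 1 →
      W t₀ ≤ compR ν g r₀ t₀ + ε * Real.exp (K * t₀) := by
    intro ε hε hε1
    have hfc : ContinuousOn W (Icc 0 t₀) := hWc.mono hsub
    have hf' : ∀ x ∈ Ico (0:ℝ) t₀, ∀ r, (-ν * W x + g * W x ^ 2) < r →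
        ∃ᶠ z in nhdsWithin x (Ioi x), slope W x z < r := by
      intro x hx r hr
      apply diniLower_frequently
      have hxT : (x : EReal) < T := by
        refine lt_trans ?_ htT
        exact_mod_cast hx.2
      calc diniLower W x ≤ ((-ν * W x + g * W x ^ 2 : ℝ) : EReal) := hW x hx.1 hxT
        _ < (r : EReal) := by exact_mod_cast hr
    have hBderiv : ∀ x : ℝ, compD ν g r₀ x ≠ 0 →
        HasDerivAt (fun s => compR ν g r₀ s + ε * Real.exp (K * s))
          ((-ν * compR ν g r₀ x + g * compR ν g r₀ x ^ 2) + ε * (Real.exp (K * x) * K)) x := by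
      intro x hx
      have h1 : HasDerivAt (fun s : ℝ => K * s) K x := by
        simpa using (hasDerivAt_id x).const_mul K
      have h2 : HasDerivAt (fun s : ℝ => ε * Real.exp (K * s))
          (ε * (Real.exp (K * x) * K)) x := h1.exp.const_mul ε
      exact (hasDerivAt_compR ν g r₀ x hx).add h2
    have hBc : ContinuousOn (fun s => compR ν g r₀ s + ε * Real.exp (K * s)) (Icc 0 t₀) :=
      fun s hs => ((hBderiv s (ne_of_gt (hDpos s hs))).continuousAt).continuousWithinAt
    have hB' : ∀ x ∈ Ico (0:ℝ) t₀,
        HasDerivWithinAt (fun s => compR ν g r₀ s + ε * Real.exp (K * s))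
          ((-ν * compR ν g r₀ x + g * compR ν g r₀ x ^ 2) + ε * (Real.exp (K * x) * K))
          (Ici x) x :=
      fun x hx => (hBderiv x (ne_of_gt (hDpos x (Ico_subset_Icc_self hx)))).hasDerivWithinAt
    have ha : W 0 ≤ compR ν g r₀ 0 + ε * Real.exp (K * 0) := by
      rw [compR_zero]
      have : 0 < ε * Real.exp (K * 0) := by positivity
      linarith
    have bound : ∀ x ∈ Ico (0:ℝ) t₀,
        W x = compR ν g r₀ x + ε * Real.exp (K * x) →
        (-ν * W x + g * W x ^ 2) <
          (-ν * compR ν g r₀ x + g * compR ν g r₀ x ^ 2) + ε * (Real.exp (K * x) * K) := by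
      intro x hx heq
      set Rx := compR ν g r₀ x with hRx
      set c := ε * Real.exp (K * x) with hc
      have hcpos : 0 < c := by positivity
      have hc1 : c ≤ 1 := by
        have hexp : Real.exp (K * x) ≤ Real.exp (K * t₀) :=
          Real.exp_le_exp.2 (by nlinarith [hx.2.le, hx.1])
        calc c = ε * Real.exp (K * x) := hc
          _ ≤ ε * Real.exp (K * t₀) := by nlinarith
          _ ≤ 1 := hε1
      have hRM : Rx ≤ M := hM x (Ico_subset_Icc_self hx)
      have hstep : -ν + g * (2 * Rx + c) < K := by
        rw [hKdef]; nlinarith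
      have hmul : c * (-ν + g * (2 * Rx + c)) < c * K :=
        mul_lt_mul_of_pos_left hstep hcpos
      have hck : ε * (Real.exp (K * x) * K) = c * K := by rw [hc]; ring
      rw [heq, hck]
      nlinarith [hmul]
    have := image_le_of_liminf_slope_right_lt_deriv_boundary' (a := 0) (b := t₀)
      hfc hf' ha hBc hB' bound
    exact this ⟨ht₀, le_refl t₀⟩
  -- pass to the limit ε → 0
  have hfin : W t₀ ≤ compR ν g r₀ t₀ := by
    refine le_of_forall_pos_le_add ?_
    intro δ hδ
    set e := Real.exp (K * t₀) with he
    have hepos : 0 < e := Real.exp_pos _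
    set ε := min (δ / e) (1 / e) with hε
    have hεpos : 0 < ε := lt_min (by positivity) (by positivity)
    have h1 : ε * e ≤ 1 := by
      calc ε * e ≤ (1 / e) * e := by
            have := min_le_right (δ / e) (1 / e); nlinarith
        _ = 1 := by field_simp
    have h2 : ε * e ≤ δ := by
      calc ε * e ≤ (δ / e) * e := by
            have := min_le_left (δ / e) (1 / e); nlinarith
        _ = δ := by field_simp
    have := main ε hεpos h1
    linarith
  simpa [compR, compD] using hfin
end

section
/- Fix an integer d ≥ 2, ν ∈ [0,∞), T ∈ (0,+∞], and a finite set G ⊂ ℤ^d∖{0} with G = −G. Let f_k : [0,T) → ℂ^d (k ∈ G) be continuous, and let γ = (γ_k)_{k∈G} be a C¹ solution on [0,T) of the Galerkin component system dγ_k/dt = −ν|k|²γ_k − i(2π)^{−d/2} ∑_{h∈G} (γ_h·(k−h))·P_k γ_{k−h} + f_k (k ∈ G, γ_j := 0 for j ∉ G) such that for every t ∈ [0,T) and k ∈ G one has conj(γ_k(t)) = γ_{−k}(t) and k·γ_k(t) = 0. Then the function t ↦ ∑_{k∈G} |γ_k(t)|² is differentiable on [0,T) and satisfies the energy balance equation d/dt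 ∑_{k∈G} |γ_k(t)|² = −2ν ∑_{k∈G} |k|²·|γ_k(t)|² + 2 ∑_{k∈G} Re( ∑_{r=1}^d conj(f_{k,r}(t))·γ_{k,r}(t) ) for every t ∈ [0,T). -/
open Filter Set Finset

/-- `k·c := ∑_r k_r c_r` (no complex conjugation). -/
noncomputable def zcDot {d : ℕ} (k : Fin d → ℤ) (c : Fin d → ℂ) : ℂ := ∑ r, (k r : ℂ) * c r

/-- `|k|²`, the squared Euclidean norm of `k ∈ ℤ^d`. -/
def zNormSq {d : ℕ} (k : Fin d → ℤ) : ℤ := ∑ r, (k r) ^ 2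

/-- `P_k c := c − (k·c)·k/|k|²`, the projection of `ℂ^d` onto the orthogonal
complement of `k`. -/
noncomputable def projPerp {d : ℕ} (k : Fin d → ℤ) (c : Fin d → ℂ) : Fin d → ℂ :=
  fun r => c r - zcDot k c * (k r : ℂ) / (zNormSq k : ℂ)

/-- The right-hand side of the Galerkin component system:
`−ν|k|²γ_k − i(2π)^{−d/2} ∑_{h∈G} (γ_h·(k−h))·P_k γ_{k−h} + f_k`. -/
noncomputable def galRHS (d : ℕ) (ν : ℝ) (G : Finset (Fin d → ℤ))
    (f : (Fin d → ℤ) → ℝ → Fin d → ℂ) (γ : (Fin d → ℤ) → ℝ → Fin d → ℂ)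
    (k : Fin d → ℤ) (t : ℝ) : Fin d → ℂ :=
  fun r =>
    -((ν : ℂ) * (zNormSq k : ℂ)) * γ k t r
      - Complex.I * (((2 * Real.pi) ^ (-(d : ℝ) / 2) : ℝ) : ℂ) *
        ∑ h ∈ G, zcDot (k - h) (γ h t) * projPerp k (γ (k - h) t) r
      + f k t r

lemma zcDot_sub_left {d : ℕ} (k h : Fin d → ℤ) (c : Fin d → ℂ) :
    zcDot (k - h) c = zcDot k c - zcDot h c := by
  simp [zcDot, Pi.sub_apply, sub_mul, Finset.sum_sub_distrib]

lemma zcDot_neg_left {d : ℕ} (k : Fin d → ℤ) (c : Fin d → ℂ) :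
    zcDot (-k) c = -zcDot k c := by
  simp [zcDot, Pi.neg_apply, Finset.sum_neg_distrib]

/-- The trilinear sum that encodes the contribution of the nonlinearity vanishes. -/
lemma keyS {d : ℕ} (G : Finset (Fin d → ℤ)) (hGsym : ∀ k ∈ G, -k ∈ G)
    (u : (Fin d → ℤ) → Fin d → ℂ) (hu0 : ∀ j, j ∉ G → u j = 0)
    (hdiv : ∀ k ∈ G, zcDot k (u k) = 0) :
    ∑ k ∈ G, ∑ h ∈ G, zcDot (k - h) (u h) * (∑ r, u (-k) r * u (k - h) r) = 0 := by
  classical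
  set A : (Fin d → ℤ) × (Fin d → ℤ) → ℂ :=
    fun x => zcDot (x.1 - x.2) (u x.2) * (∑ r, u (-x.1) r * u (x.1 - x.2) r) with hA
  have h1 : ∑ k ∈ G, ∑ h ∈ G, zcDot (k - h) (u h) * (∑ r, u (-k) r * u (k - h) r)
      = ∑ x ∈ G ×ˢ G, A x := by
    rw [Finset.sum_product]
  rw [h1]
  have h2 : ∑ x ∈ G ×ˢ G, A x
      = ∑ x ∈ (G ×ˢ G).filter (fun x => x.1 - x.2 ∈ G), A x := by
    refine (Finset.sum_filter_of_ne ?_).symm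
    intro x hx hAx
    by_contra hng
    apply hAx
    simp [hA, hu0 _ hng]
  rw [h2]
  have key : ∀ x ∈ (G ×ˢ G).filter (fun x => x.1 - x.2 ∈ G),
      A x + A (x.2 - x.1, x.2) = 0 := by
    rintro ⟨k, h⟩ hx
    simp only [Finset.mem_filter, Finset.mem_product] at hx
    obtain ⟨⟨hk, hh⟩, hkh⟩ := hx
    have e1 : zcDot (k - h) (u h) = zcDot k (u h) := by
      rw [zcDot_sub_left, hdiv h hh, sub_zero]
    have e2 : (h - k) - h = -k := by ring
    have e3 : -(h - k) = k - h := by ring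
    simp only [hA, e2, e3]
    rw [e1, zcDot_neg_left]
    have e4 : (∑ r, u (k - h) r * u (-k) r) = ∑ r, u (-k) r * u (k - h) r :=
      Finset.sum_congr rfl fun r _ => mul_comm _ _
    rw [e4]
    ring
  refine Finset.sum_involution (fun x _ => (x.2 - x.1, x.2)) (fun a ha => key a ha)
    (fun a ha hne => ?_) (fun a ha => ?_) (fun a ha => ?_)
  · intro heq
    have := key a ha
    rw [heq] at this
    apply hne
    have h2a : (2 : ℂ) * A a = 0 := by linear_combination this
    simpa using h2a
  · simp only [Finset.mem_filter, Finset.mem_product] at ha ⊢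
    obtain ⟨⟨hk, hh⟩, hkh⟩ := ha
    refine ⟨⟨?_, hh⟩, ?_⟩
    · have : a.2 - a.1 = -(a.1 - a.2) := by ring
      rw [this]; exact hGsym _ hkh
    · have : a.2 - a.1 - a.2 = -a.1 := by ring
      rw [this]; exact hGsym _ hk
  · ext <;> simp

lemma hasDeriv_normSq {g : ℝ → ℂ} {g' : ℂ} {s : Set ℝ} {t : ℝ}
    (hg : HasDerivWithinAt g g' s t) :
    HasDerivWithinAt (fun τ => Complex.normSq (g τ))
      (2 * ((starRingEnd ℂ) (g t) * g').re) s t := by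
  have h1 : HasDerivWithinAt (fun τ => (starRingEnd ℂ) (g τ) * g τ)
      ((starRingEnd ℂ) g' * g t + (starRingEnd ℂ) (g t) * g') s t := by
    exact (hg.star.mul hg)
  have h2 := Complex.reCLM.hasFDerivAt.comp_hasDerivWithinAt t h1
  have h3 : (fun τ => Complex.reCLM ((starRingEnd ℂ) (g τ) * g τ))
      = fun τ => Complex.normSq (g τ) := by
    funext τ
    simp [Complex.normSq_apply]
  rw [Function.comp_def, h3] at h2
  refine h2.congr_deriv ?_
  simp [Complex.add_re, Complex.mul_re]
  ring

lemma reconj (a b : ℂ) : ((starRingEnd ℂ) a * b).re = ((starRingEnd ℂ) b * a).re := by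
  simp [Complex.mul_re]
  ring

/-- Energy balance equation for the Galerkin approximant (Step 1 of Appendix B of
the paper): the cubic contribution of the nonlinearity vanishes and
`d/dt ∑_k |γ_k|² = −2ν ∑_k |k|²|γ_k|² + 2 ∑_k Re⟨f_k, γ_k⟩`. -/
theorem stmt11 (d : ℕ) (hd : 2 ≤ d) (ν : ℝ) (hν : 0 ≤ ν) (T : EReal) (hT : 0 < T)
    (G : Finset (Fin d → ℤ)) (hG0 : (0 : Fin d → ℤ) ∉ G) (hGsym : ∀ k ∈ G, -k ∈ G)
    (f : (Fin d → ℤ) → ℝ → Fin d → ℂ)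
    (hfc : ∀ k ∈ G, ContinuousOn (f k) {t : ℝ | 0 ≤ t ∧ (t : EReal) < T})
    (γ : (Fin d → ℤ) → ℝ → Fin d → ℂ)
    (hγ0 : ∀ j, j ∉ G → ∀ t : ℝ, γ j t = 0)
    (hODE : ∀ k ∈ G, ∀ t : ℝ, 0 ≤ t → (t : EReal) < T →
      HasDerivWithinAt (γ k) (galRHS d ν G f γ k t) {τ : ℝ | 0 ≤ τ ∧ (τ : EReal) < T} t)
    (hconj : ∀ k ∈ G, ∀ t : ℝ, 0 ≤ t → (t : EReal) < T →
      ∀ r, (starRingEnd ℂ) (γ k t r) = γ (-k) t r)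
    (hdiv : ∀ k ∈ G, ∀ t : ℝ, 0 ≤ t → (t : EReal) < T → zcDot k (γ k t) = 0) :
    ∀ t : ℝ, 0 ≤ t → (t : EReal) < T →
      HasDerivWithinAt (fun τ => ∑ k ∈ G, ∑ r, Complex.normSq (γ k τ r))
        (-2 * ν * ∑ k ∈ G, (zNormSq k : ℝ) * ∑ r, Complex.normSq (γ k t r)
          + 2 * ∑ k ∈ G, (∑ r, (starRingEnd ℂ) (f k t r) * γ k t r).re)
        {τ : ℝ | 0 ≤ τ ∧ (τ : EReal) < T} t := by
  classical
  intro t ht0 htT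
  set s : Set ℝ := {τ : ℝ | 0 ≤ τ ∧ (τ : EReal) < T} with hsdef
  set c0 : ℂ := (((2 * Real.pi) ^ (-(d : ℝ) / 2) : ℝ) : ℂ) with hc0
  have hmain : HasDerivWithinAt (fun τ => ∑ k ∈ G, ∑ r, Complex.normSq (γ k τ r))
      (∑ k ∈ G, ∑ r, 2 * ((starRingEnd ℂ) (γ k t r) * galRHS d ν G f γ k t r).re) s t := by
    refine HasDerivWithinAt.fun_sum fun k hk => ?_
    refine HasDerivWithinAt.fun_sum fun r _ => ?_
    have h := hODE k hk t ht0 htT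
    have hr : HasDerivWithinAt (fun τ => γ k τ r) (galRHS d ν G f γ k t r) s t :=
      (ContinuousLinearMap.proj (R := ℝ) (φ := fun _ : Fin d => ℂ)
        r).hasFDerivAt.comp_hasDerivWithinAt t h
    exact hasDeriv_normSq hr
  convert hmain using 1
  have hdiv' : ∀ k ∈ G, zcDot k (γ k t) = 0 := fun k hk => hdiv k hk t ht0 htT
  have hconj' : ∀ k ∈ G, ∀ r, (starRingEnd ℂ) (γ k t r) = γ (-k) t r :=
    fun k hk => hconj k hk t ht0 htT
  -- the projection can be dropped
  have hproj : ∀ k ∈ G, ∀ c : Fin d → ℂ,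
      ∑ r, (starRingEnd ℂ) (γ k t r) * projPerp k c r = ∑ r, γ (-k) t r * c r := by
    intro k hk c
    have hz : zcDot k (γ (-k) t) = 0 := by
      have := hdiv (-k) (hGsym k hk) t ht0 htT
      rw [zcDot_neg_left] at this
      exact neg_eq_zero.mp this
    have e1 : ∀ r : Fin d, (starRingEnd ℂ) (γ k t r) * projPerp k c r
        = γ (-k) t r * c r
          - (zcDot k c / (zNormSq k : ℂ)) * ((k r : ℂ) * γ (-k) t r) := by
      intro r
      rw [hconj' k hk r]
      simp only [projPerp]
      ring
    rw [Finset.sum_congr rfl fun r _ => e1 r, Finset.sum_sub_distrib, ← Finset.mul_sum]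
    have e2 : (∑ r, (k r : ℂ) * γ (-k) t r) = zcDot k (γ (-k) t) := rfl
    rw [e2, hz, mul_zero, sub_zero]
  -- trilinear sum vanishes
  have hS : ∑ k ∈ G, ∑ h ∈ G,
      zcDot (k - h) (γ h t) * (∑ r, γ (-k) t r * γ (k - h) t r) = 0 :=
    keyS G hGsym (fun j => γ j t) (fun j hj => hγ0 j hj t) hdiv'
  -- per-k expansion, complex level
  have ecx : ∀ k ∈ G,
      ∑ r, (starRingEnd ℂ) (γ k t r) * galRHS d ν G f γ k t r
      = ((-(ν * (zNormSq k : ℝ) * ∑ r, Complex.normSq (γ k t r)) : ℝ) : ℂ)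
        + (-(Complex.I * c0)) *
            (∑ h ∈ G, zcDot (k - h) (γ h t) * (∑ r, γ (-k) t r * γ (k - h) t r))
        + ∑ r, (starRingEnd ℂ) (γ k t r) * f k t r := by
    intro k hk
    have e1 : ∀ r : Fin d, (starRingEnd ℂ) (γ k t r) * galRHS d ν G f γ k t r
        = (-((ν : ℂ) * (zNormSq k : ℂ))) * ((starRingEnd ℂ) (γ k t r) * γ k t r)
          + (-(Complex.I * c0)) * ((starRingEnd ℂ) (γ k t r) *
              ∑ h ∈ G, zcDot (k - h) (γ h t) * projPerp k (γ (k - h) t) r)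
          + (starRingEnd ℂ) (γ k t r) * f k t r := by
      intro r
      simp only [galRHS, ← hc0]
      ring
    rw [Finset.sum_congr rfl fun r _ => e1 r, Finset.sum_add_distrib,
      Finset.sum_add_distrib, ← Finset.mul_sum, ← Finset.mul_sum]
    congr 2
    · have e2 : ∑ r, (starRingEnd ℂ) (γ k t r) * γ k t r
          = ((∑ r, Complex.normSq (γ k t r) : ℝ) : ℂ) := by
        push_cast
        exact Finset.sum_congr rfl fun r _ => Complex.normSq_eq_conj_mul_self.symm
      rw [e2]
      push_cast
      ring
    · congr 1
      have e3 : ∀ r : Fin d, (starRingEnd ℂ) (γ k t r) *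
          (∑ h ∈ G, zcDot (k - h) (γ h t) * projPerp k (γ (k - h) t) r)
          = ∑ h ∈ G, zcDot (k - h) (γ h t) *
              ((starRingEnd ℂ) (γ k t r) * projPerp k (γ (k - h) t) r) := by
        intro r
        rw [Finset.mul_sum]
        exact Finset.sum_congr rfl fun h _ => by ring
      rw [Finset.sum_congr rfl fun r _ => e3 r, Finset.sum_comm]
      refine Finset.sum_congr rfl fun h _ => ?_
      rw [← Finset.mul_sum, hproj k hk]
  -- per-k expansion, real level
  have expand : ∀ k ∈ G,
      ∑ r, 2 * ((starRingEnd ℂ) (γ k t r) * galRHS d ν G f γ k t r).re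
      = -2 * ν * ((zNormSq k : ℝ) * ∑ r, Complex.normSq (γ k t r))
        + 2 * ((-(Complex.I * c0)) *
            (∑ h ∈ G, zcDot (k - h) (γ h t) * (∑ r, γ (-k) t r * γ (k - h) t r))).re
        + 2 * (∑ r, (starRingEnd ℂ) (f k t r) * γ k t r).re := by
    intro k hk
    have e0 : ∑ r, 2 * ((starRingEnd ℂ) (γ k t r) * galRHS d ν G f γ k t r).re
        = 2 * (∑ r, (starRingEnd ℂ) (γ k t r) * galRHS d ν G f γ k t r).re := by
      rw [Complex.re_sum, Finset.mul_sum]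
    rw [e0, ecx k hk]
    have e4 : (∑ r, (starRingEnd ℂ) (γ k t r) * f k t r).re
        = (∑ r, (starRingEnd ℂ) (f k t r) * γ k t r).re := by
      rw [Complex.re_sum, Complex.re_sum]
      exact Finset.sum_congr rfl fun r _ => reconj _ _
    simp only [Complex.add_re, Complex.ofReal_re]
    rw [e4]
    ring
  -- assemble
  rw [Finset.sum_congr rfl expand, Finset.sum_add_distrib, Finset.sum_add_distrib]
  have z1 : ∑ k ∈ G, 2 * ((-(Complex.I * c0)) *
      (∑ h ∈ G, zcDot (k - h) (γ h t) * (∑ r, γ (-k) t r * γ (k - h) t r))).re = 0 := by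
    have : ∑ k ∈ G, ((-(Complex.I * c0)) *
        (∑ h ∈ G, zcDot (k - h) (γ h t) * (∑ r, γ (-k) t r * γ (k - h) t r))).re
        = ((-(Complex.I * c0)) * ∑ k ∈ G, ∑ h ∈ G,
            zcDot (k - h) (γ h t) * (∑ r, γ (-k) t r * γ (k - h) t r)).re := by
      rw [Finset.mul_sum, Complex.re_sum]
    rw [← Finset.mul_sum, this, hS, mul_zero, Complex.zero_re, mul_zero]
  rw [z1, add_zero]
  rw [← Finset.mul_sum]
  rw [← Finset.mul_sum]
end

section
/- Fix an integer d ≥ 2, ν ∈ [0,∞), T ∈ (0,+∞], and a finite set G ⊂ ℤ^d∖{0} with G = −G. Let f_k : [0,T) → ℂ^d (k ∈ G) be continuous, and let γ = (γ_k)_{k∈G} be a C¹ solution on [0,T) of the Galerkin component system dγ_k/dt = −ν|k|²γ_k − i(2π)^{−d/2} ∑_{h∈G} (γ_h·(k−h))·P_k γ_{k−h} + f_k (k ∈ G, γ_j := 0 for j ∉ G) such that for every t ∈ [0,T) and k ∈ G one has conj(γ_k(t)) = γ_{−k}(t) and k·γ_k(t) = 0. Then for every t ∈ [0,T): √(∑_{k∈G}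 |γ_k(t)|²) ≤ ( √(∑_{k∈G} |γ_k(0)|²) + ∫₀ᵗ e^{νs} √(∑_{k∈G} |f_k(s)|²) ds ) · e^{−νt}. -/
open Filter Set Finset
open Topology

lemma zcDot_add {d : ℕ} (a b : Fin d → ℤ) (c : Fin d → ℂ) :
    zcDot (a + b) c = zcDot a c + zcDot b c := by
  simp [zcDot, add_mul, Finset.sum_add_distrib]

lemma zcDot_neg {d : ℕ} (a : Fin d → ℤ) (c : Fin d → ℂ) :
    zcDot (-a) c = -zcDot a c := by
  simp [zcDot, Finset.sum_neg_distrib]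

lemma sumS_zero {d : ℕ} (G : Finset (Fin d → ℤ)) (hGsym : ∀ k ∈ G, -k ∈ G)
    (γ : (Fin d → ℤ) → Fin d → ℂ) (hγ0 : ∀ j, j ∉ G → γ j = 0)
    (hdiv : ∀ k ∈ G, zcDot k (γ k) = 0) :
    ∑ p ∈ G ×ˢ G, zcDot (p.1 - p.2) (γ p.2) * (∑ r, γ (p.1 - p.2) r * γ (-p.1) r) = 0 := by
  classical
  set F : (Fin d → ℤ) × (Fin d → ℤ) → ℂ :=
    fun p => zcDot (p.1 - p.2) (γ p.2) * (∑ r, γ (p.1 - p.2) r * γ (-p.1) r) with hF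
  set g : (Fin d → ℤ) × (Fin d → ℤ) → (Fin d → ℤ) × (Fin d → ℤ) :=
    fun p => if p.1 - p.2 ∈ G then (p.2 - p.1, p.2) else p with hg
  have key : ∀ p ∈ G ×ˢ G, F p + F (g p) = 0 := by
    rintro ⟨k, h⟩ hp
    rw [Finset.mem_product] at hp
    by_cases hc : k - h ∈ G
    · have hg' : g (k, h) = (h - k, h) := by simp [hg, hc]
      rw [hg']
      have e1 : (h - k) - h = -k := by abel
      have e2 : -(h - k) = k - h := by abel
      simp only [hF, e1, e2]
      have e3 : (∑ r, γ (-k) r * γ (k - h) r) = ∑ r, γ (k - h) r * γ (-k) r := by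
        exact Finset.sum_congr rfl fun r _ => mul_comm _ _
      rw [e3, ← add_mul]
      have e4 : zcDot (k - h) (γ h) + zcDot (-k) (γ h) = zcDot (-h) (γ h) := by
        rw [← zcDot_add]; congr 1; abel
      rw [e4, zcDot_neg, hdiv h hp.2]
      simp
    · have hg' : g (k, h) = (k, h) := by simp [hg, hc]
      rw [hg']
      have : γ (k - h) = 0 := hγ0 _ hc
      simp [hF, this]
  refine Finset.sum_involution (fun p _ => g p) (fun p hp => key p hp) ?_ ?_ ?_
  · intro p hp hFp heq
    change g p = p at heq
    have := key p hp
    rw [heq] at this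
    exact hFp (by linear_combination (this : F p + F p = 0) / 2)
  · rintro ⟨k, h⟩ hp
    rw [Finset.mem_product] at hp
    by_cases hc : k - h ∈ G
    · show g (k, h) ∈ G ×ˢ G
      have : g (k, h) = (h - k, h) := by simp [hg, hc]
      rw [this, Finset.mem_product]
      have : h - k = -(k - h) := by abel
      exact ⟨by rw [this]; exact hGsym _ hc, hp.2⟩
    · show g (k, h) ∈ G ×ˢ G
      simpa [hg, hc] using Finset.mem_product.2 hp
  · rintro ⟨k, h⟩ hp
    rw [Finset.mem_product] at hp
    show g (g (k, h)) = (k, h)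
    by_cases hc : k - h ∈ G
    · have h1 : g (k, h) = (h - k, h) := by simp [hg, hc]
      rw [h1]
      have h2 : (h - k) - h = -k := by abel
      have h3 : -k ∈ G := hGsym _ hp.1
      have : g (h - k, h) = (h - (h - k), h) := by simp [hg, h2, h3]
      rw [this]
      have : h - (h - k) = k := by abel
      simp [this]
    · simp [hg, hc]

lemma one_le_zNormSq {d : ℕ} {k : Fin d → ℤ} (hk : k ≠ 0) : (1 : ℤ) ≤ zNormSq k := by
  obtain ⟨r, hr⟩ := Function.ne_iff.1 hk
  have h0 : k r ≠ 0 := hr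
  have h1 : (1 : ℤ) ≤ (k r) ^ 2 := by
    have := Int.one_le_abs h0
    nlinarith [sq_abs (k r)]
  calc (1 : ℤ) ≤ (k r) ^ 2 := h1
    _ ≤ zNormSq k := Finset.single_le_sum (fun i _ => sq_nonneg (k i)) (Finset.mem_univ r)

lemma hasDerivWithinAt_normSq {z : ℝ → ℂ} {z' : ℂ} {s : Set ℝ} {t : ℝ}
    (hz : HasDerivWithinAt z z' s t) :
    HasDerivWithinAt (fun τ => Complex.normSq (z τ))
      (2 * ((starRingEnd ℂ) (z t) * z').re) s t := by
  have hre : HasDerivWithinAt (fun τ => (z τ).re) z'.re s t := by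
    exact Complex.reCLM.hasFDerivAt.comp_hasDerivWithinAt t hz
  have him : HasDerivWithinAt (fun τ => (z τ).im) z'.im s t := by
    exact Complex.imCLM.hasFDerivAt.comp_hasDerivWithinAt t hz
  have := (hre.mul hre).add (him.mul him)
  refine this.congr_deriv ?_
  simp only [Complex.mul_re, Complex.conj_re, Complex.conj_im]
  ring

lemma cauchy_schwarz_re {ι : Type*} (s : Finset ι) (a b : ι → ℂ) :
    (∑ i ∈ s, ((starRingEnd ℂ) (a i) * b i).re) ≤
      Real.sqrt (∑ i ∈ s, Complex.normSq (a i)) * Real.sqrt (∑ i ∈ s, Complex.normSq (b i)) := by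
  have h1 : (∑ i ∈ s, ((starRingEnd ℂ) (a i) * b i).re) ≤
      ∑ i ∈ s, ‖a i‖ * ‖b i‖ := by
    refine Finset.sum_le_sum fun i _ => ?_
    calc ((starRingEnd ℂ) (a i) * b i).re ≤ ‖(starRingEnd ℂ) (a i) * b i‖ :=
          Complex.re_le_norm _
      _ = ‖a i‖ * ‖b i‖ := by
          rw [norm_mul, Complex.norm_conj]
  refine h1.trans ?_
  have h2 : (∑ i ∈ s, ‖a i‖ * ‖b i‖) ^ 2 ≤
      (∑ i ∈ s, ‖a i‖ ^ 2) * ∑ i ∈ s, ‖b i‖ ^ 2 :=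
    Finset.sum_mul_sq_le_sq_mul_sq s _ _
  have hA : 0 ≤ ∑ i ∈ s, ‖a i‖ * ‖b i‖ :=
    Finset.sum_nonneg fun i _ => mul_nonneg (norm_nonneg _) (norm_nonneg _)
  have h3 : ∑ i ∈ s, ‖a i‖ * ‖b i‖ ≤
      Real.sqrt ((∑ i ∈ s, ‖a i‖ ^ 2) * ∑ i ∈ s, ‖b i‖ ^ 2) := by
    rw [← Real.sqrt_sq hA]
    exact Real.sqrt_le_sqrt h2
  refine h3.trans_eq ?_
  rw [Real.sqrt_mul (Finset.sum_nonneg fun i _ => sq_nonneg _)]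
  congr 2 <;> exact Finset.sum_congr rfl fun i _ => Complex.sq_norm _


lemma energy_identity {d : ℕ} (ν : ℝ) (G : Finset (Fin d → ℤ)) (hGsym : ∀ k ∈ G, -k ∈ G)
    (f γ : (Fin d → ℤ) → ℝ → Fin d → ℂ) (x : ℝ)
    (hγ0 : ∀ j, j ∉ G → γ j x = 0)
    (hconj : ∀ k ∈ G, ∀ r, (starRingEnd ℂ) (γ k x r) = γ (-k) x r)
    (hdiv : ∀ k ∈ G, zcDot k (γ k x) = 0) :
    (∑ k ∈ G, ∑ r, 2 * ((starRingEnd ℂ) (γ k x r) * galRHS d ν G f γ k x r).re)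
      = -(2*ν) * (∑ k ∈ G, (zNormSq k : ℝ) * ∑ r, Complex.normSq (γ k x r))
        + 2 * ∑ k ∈ G, ∑ r, ((starRingEnd ℂ) (γ k x r) * f k x r).re := by
  classical
  set c : ℂ := Complex.I * (((2 * Real.pi) ^ (-(d : ℝ) / 2) : ℝ) : ℂ) with hc
  -- projection identity
  have hproj : ∀ k ∈ G, ∀ cc : Fin d → ℂ,
      (∑ r, (starRingEnd ℂ) (γ k x r) * projPerp k cc r) = ∑ r, cc r * γ (-k) x r := by
    intro k hk cc
    have hzero : (∑ r, ((k r : ℂ)) * (starRingEnd ℂ) (γ k x r)) = 0 := by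
      calc ∑ r, (k r : ℂ) * (starRingEnd ℂ) (γ k x r)
          = ∑ r, (k r : ℂ) * γ (-k) x r := by
            refine Finset.sum_congr rfl fun r _ => by rw [hconj k hk r]
        _ = zcDot k (γ (-k) x) := rfl
        _ = - zcDot (-k) (γ (-k) x) := by rw [zcDot_neg]; ring
        _ = 0 := by rw [hdiv (-k) (hGsym k hk)]; ring
    calc ∑ r, (starRingEnd ℂ) (γ k x r) * projPerp k cc r
        = ∑ r, ((starRingEnd ℂ) (γ k x r) * cc r
            - (zcDot k cc / (zNormSq k : ℂ)) * ((k r : ℂ) * (starRingEnd ℂ) (γ k x r))) := by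
          refine Finset.sum_congr rfl fun r _ => ?_
          simp only [projPerp]; ring
      _ = (∑ r, (starRingEnd ℂ) (γ k x r) * cc r)
            - (zcDot k cc / (zNormSq k : ℂ)) * ∑ r, ((k r : ℂ) * (starRingEnd ℂ) (γ k x r)) := by
          rw [Finset.sum_sub_distrib, Finset.mul_sum]
      _ = ∑ r, cc r * γ (-k) x r := by
          rw [hzero, mul_zero, sub_zero]
          refine Finset.sum_congr rfl fun r _ => by rw [hconj k hk r, mul_comm]
  -- the complex inner product with the RHS, per mode k
  have hper : ∀ k ∈ G,
      (∑ r, (starRingEnd ℂ) (γ k x r) * galRHS d ν G f γ k x r)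
        = -((ν : ℂ) * (zNormSq k : ℂ)) * ((∑ r, Complex.normSq (γ k x r) : ℝ) : ℂ)
          - c * (∑ h ∈ G, zcDot (k - h) (γ h x) * (∑ r, γ (k - h) x r * γ (-k) x r))
          + ∑ r, (starRingEnd ℂ) (γ k x r) * f k x r := by
    intro k hk
    have step1 : (∑ r, (starRingEnd ℂ) (γ k x r) * galRHS d ν G f γ k x r)
        = (∑ r, -((ν : ℂ) * (zNormSq k : ℂ)) * ((starRingEnd ℂ) (γ k x r) * γ k x r))
          - (∑ r, c * ∑ h ∈ G, zcDot (k - h) (γ h x) *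
              ((starRingEnd ℂ) (γ k x r) * projPerp k (γ (k - h) x) r))
          + ∑ r, (starRingEnd ℂ) (γ k x r) * f k x r := by
      rw [← Finset.sum_sub_distrib, ← Finset.sum_add_distrib]
      refine Finset.sum_congr rfl fun r _ => ?_
      simp only [galRHS, ← hc]
      rw [mul_add, mul_sub]
      congr 1
      · congr 1
        · ring
        · rw [Finset.mul_sum, Finset.mul_sum, Finset.mul_sum]
          refine Finset.sum_congr rfl fun h _ => by ring
    rw [step1]
    congr 1
    · congr 1
      · rw [← Finset.mul_sum]
        congr 1
        push_cast
        refine Finset.sum_congr rfl fun r _ => ?_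
        rw [mul_comm, Complex.mul_conj]
      · rw [← Finset.mul_sum]
        congr 1
        rw [Finset.sum_comm]
        refine Finset.sum_congr rfl fun h _ => ?_
        rw [← Finset.mul_sum, ← hproj k hk (γ (k - h) x)]
  -- sum over k and kill the nonlinear part
  have hZ : (∑ k ∈ G, ∑ r, (starRingEnd ℂ) (γ k x r) * galRHS d ν G f γ k x r)
      = (((-(2*ν) * (∑ k ∈ G, (zNormSq k : ℝ) * ∑ r, Complex.normSq (γ k x r))) / 2 : ℝ) : ℂ)
        + ∑ k ∈ G, ∑ r, (starRingEnd ℂ) (γ k x r) * f k x r := by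
    rw [Finset.sum_congr rfl hper]
    rw [Finset.sum_add_distrib, Finset.sum_sub_distrib]
    have hS : (∑ k ∈ G, c * (∑ h ∈ G, zcDot (k - h) (γ h x) *
        (∑ r, γ (k - h) x r * γ (-k) x r))) = 0 := by
      rw [← Finset.mul_sum]
      have := sumS_zero G hGsym (fun j => γ j x) hγ0 hdiv
      rw [Finset.sum_product] at this
      simp only at this
      rw [this, mul_zero]
    rw [hS, sub_zero]
    congr 1
    push_cast
    rw [Finset.mul_sum, Finset.sum_div]
    refine Finset.sum_congr rfl fun k _ => by push_cast; ring
  -- take real parts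
  have hre : (∑ k ∈ G, ∑ r, 2 * ((starRingEnd ℂ) (γ k x r) * galRHS d ν G f γ k x r).re)
      = 2 * (∑ k ∈ G, ∑ r, (starRingEnd ℂ) (γ k x r) * galRHS d ν G f γ k x r).re := by
    rw [Complex.re_sum, Finset.mul_sum]
    refine Finset.sum_congr rfl fun k _ => ?_
    rw [Complex.re_sum, Finset.mul_sum]
  rw [hre, hZ]
  rw [Complex.add_re, Complex.ofReal_re, Complex.re_sum]
  rw [Finset.sum_congr rfl fun k _ => Complex.re_sum (s := Finset.univ)
    (f := fun r => (starRingEnd ℂ) (γ k x r) * f k x r)]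
  ring


/-- L² a priori bound of Lemma 6.4(iii) of the paper, in Fourier components. -/
theorem stmt13 (d : ℕ) (hd : 2 ≤ d) (ν : ℝ) (hν : 0 ≤ ν) (T : EReal) (hT : 0 < T)
    (G : Finset (Fin d → ℤ)) (hG0 : (0 : Fin d → ℤ) ∉ G) (hGsym : ∀ k ∈ G, -k ∈ G)
    (f : (Fin d → ℤ) → ℝ → Fin d → ℂ)
    (hfc : ∀ k ∈ G, ContinuousOn (f k) {t : ℝ | 0 ≤ t ∧ (t : EReal) < T})
    (γ : (Fin d → ℤ) → ℝ → Fin d → ℂ)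
    (hγ0 : ∀ j, j ∉ G → ∀ t : ℝ, γ j t = 0)
    (hODE : ∀ k ∈ G, ∀ t : ℝ, 0 ≤ t → (t : EReal) < T →
      HasDerivWithinAt (γ k) (galRHS d ν G f γ k t) {τ : ℝ | 0 ≤ τ ∧ (τ : EReal) < T} t)
    (hconj : ∀ k ∈ G, ∀ t : ℝ, 0 ≤ t → (t : EReal) < T →
      ∀ r, (starRingEnd ℂ) (γ k t r) = γ (-k) t r)
    (hdiv : ∀ k ∈ G, ∀ t : ℝ, 0 ≤ t → (t : EReal) < T → zcDot k (γ k t) = 0) :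
    ∀ t : ℝ, 0 ≤ t → (t : EReal) < T →
      Real.sqrt (∑ k ∈ G, ∑ r, Complex.normSq (γ k t r)) ≤
        (Real.sqrt (∑ k ∈ G, ∑ r, Complex.normSq (γ k 0 r))
          + ∫ s in (0 : ℝ)..t, Real.exp (ν * s) *
              Real.sqrt (∑ k ∈ G, ∑ r, Complex.normSq (f k s r))) *
          Real.exp (-ν * t) := by
  classical
  intro t₀ ht₀0 ht₀T
  set s : Set ℝ := {τ : ℝ | 0 ≤ τ ∧ (τ : EReal) < T} with hsdef
  set E : ℝ → ℝ := fun τ => ∑ k ∈ G, ∑ r, Complex.normSq (γ k τ r) with hEdef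
  set Fq : ℝ → ℝ := fun τ => ∑ k ∈ G, ∑ r, Complex.normSq (f k τ r) with hFdef
  set gq : ℝ → ℝ := fun τ => Real.exp (ν * τ) * Real.sqrt (Fq τ) with hgdef
  have hEnn : ∀ τ, 0 ≤ E τ := fun τ =>
    Finset.sum_nonneg fun k _ => Finset.sum_nonneg fun r _ => Complex.normSq_nonneg _
  have hFnn : ∀ τ, 0 ≤ Fq τ := fun τ =>
    Finset.sum_nonneg fun k _ => Finset.sum_nonneg fun r _ => Complex.normSq_nonneg _
  have hmem0 : (0 : ℝ) ∈ s := ⟨le_refl 0, hT⟩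
  have hmemt₀ : t₀ ∈ s := ⟨ht₀0, ht₀T⟩
  -- derivative of the energy
  set D : ℝ → ℝ := fun τ => ∑ k ∈ G, ∑ r,
    2 * ((starRingEnd ℂ) (γ k τ r) * galRHS d ν G f γ k τ r).re with hDdef
  have hED : ∀ x ∈ s, HasDerivWithinAt E (D x) s x := by
    intro x hx
    exact HasDerivWithinAt.fun_sum fun k hk => HasDerivWithinAt.fun_sum fun r _ =>
      hasDerivWithinAt_normSq ((hasDerivWithinAt_pi.1 (hODE k hk x hx.1 hx.2)) r)
  -- bound on the derivative
  have hDbound : ∀ x ∈ s, D x ≤ -(2*ν) * E x + 2 * (Real.sqrt (E x) * Real.sqrt (Fq x)) := by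
    intro x hx
    have hid := energy_identity ν G hGsym f γ x (fun j hj => hγ0 j hj x)
      (fun k hk => hconj k hk x hx.1 hx.2) (fun k hk => hdiv k hk x hx.1 hx.2)
    have h1 : E x ≤ ∑ k ∈ G, (zNormSq k : ℝ) * ∑ r, Complex.normSq (γ k x r) := by
      refine Finset.sum_le_sum fun k hk => ?_
      have hk0 : k ≠ 0 := fun h => hG0 (h ▸ hk)
      have : (1 : ℝ) ≤ (zNormSq k : ℝ) := by exact_mod_cast one_le_zNormSq hk0
      exact le_mul_of_one_le_left
        (Finset.sum_nonneg fun r _ => Complex.normSq_nonneg _) this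
    have h2 : (∑ k ∈ G, ∑ r, ((starRingEnd ℂ) (γ k x r) * f k x r).re)
        ≤ Real.sqrt (E x) * Real.sqrt (Fq x) := by
      have := cauchy_schwarz_re (G ×ˢ (Finset.univ : Finset (Fin d)))
        (fun p => γ p.1 x p.2) (fun p => f p.1 x p.2)
      rw [Finset.sum_product, Finset.sum_product, Finset.sum_product] at this
      exact this
    calc D x = -(2*ν) * (∑ k ∈ G, (zNormSq k : ℝ) * ∑ r, Complex.normSq (γ k x r))
          + 2 * ∑ k ∈ G, ∑ r, ((starRingEnd ℂ) (γ k x r) * f k x r).re := hid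
      _ ≤ -(2*ν) * E x + 2 * (Real.sqrt (E x) * Real.sqrt (Fq x)) := by
          have := mul_le_mul_of_nonneg_left h1 (by linarith : (0:ℝ) ≤ 2*ν)
          nlinarith
  -- continuity
  have hγcont : ∀ k ∈ G, ContinuousOn (γ k) s := fun k hk x hx =>
    (hODE k hk x hx.1 hx.2).continuousWithinAt
  have hEcont : ContinuousOn E s := by
    refine continuousOn_finset_sum _ fun k hk => continuousOn_finset_sum _ fun r _ => ?_
    exact Complex.continuous_normSq.comp_continuousOn
      ((continuous_apply r).comp_continuousOn (hγcont k hk))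
  have hFcont : ContinuousOn Fq s := by
    refine continuousOn_finset_sum _ fun k hk => continuousOn_finset_sum _ fun r _ => ?_
    exact Complex.continuous_normSq.comp_continuousOn
      ((continuous_apply r).comp_continuousOn (hfc k hk))
  have hgcont : ContinuousOn gq s :=
    ((Real.continuous_exp.comp (continuous_const.mul continuous_id)).continuousOn).mul
      hFcont.sqrt
  -- choose b with t₀ < b and (b : EReal) < T
  obtain ⟨z, hz1, hz2⟩ := exists_between ht₀T
  have hzt : z ≠ ⊤ := ne_of_lt (lt_of_lt_of_le hz2 le_top)
  have hzb : z ≠ ⊥ := ne_of_gt (lt_of_le_of_lt (EReal.bot_lt_coe t₀).le hz1)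
  set b : ℝ := z.toReal with hbdef
  have hbz : (b : EReal) = z := EReal.coe_toReal hzt hzb
  have ht₀b : t₀ < b := by
    rw [← EReal.coe_lt_coe_iff]; rw [hbz]; exact hz1
  have hbT : (b : EReal) < T := by rw [hbz]; exact hz2
  have hIccs : Icc 0 t₀ ⊆ s := fun τ hτ =>
    ⟨hτ.1, lt_of_le_of_lt (EReal.coe_le_coe_iff.2 hτ.2) ht₀T⟩
  have hIcobs : ∀ x ∈ Ico (0:ℝ) t₀, Ico x b ⊆ s := fun x hx τ hτ =>
    ⟨le_trans hx.1 hτ.1, lt_of_lt_of_le (lt_of_lt_of_le (EReal.coe_lt_coe_iff.2 hτ.2) hbT.le) le_rfl⟩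
  have hnhds : ∀ x ∈ Ico (0:ℝ) t₀, s ∈ 𝓝[Ici x] x := by
    intro x hx
    refine mem_nhdsWithin.2 ⟨Iio b, isOpen_Iio, lt_trans hx.2 ht₀b, ?_⟩
    rintro τ ⟨hτ1, hτ2⟩
    exact hIcobs x hx ⟨hτ2, hτ1⟩
  have hnhds' : ∀ x ∈ Ico (0:ℝ) t₀, s ∈ 𝓝[Ioi x] x := by
    intro x hx
    refine mem_nhdsWithin.2 ⟨Iio b, isOpen_Iio, lt_trans hx.2 ht₀b, ?_⟩
    rintro τ ⟨hτ1, hτ2⟩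
    exact hIcobs x hx ⟨le_of_lt hτ2, hτ1⟩
  -- integrability of gq
  have hgint : IntervalIntegrable gq MeasureTheory.volume 0 t₀ := by
    apply ContinuousOn.intervalIntegrable
    rw [Set.uIcc_of_le ht₀0]
    exact hgcont.mono hIccs
  -- the epsilon step
  have main : ∀ ε : ℝ, 0 < ε →
      Real.exp (ν * t₀) * Real.sqrt (E t₀) ≤
        Real.sqrt (E 0 + ε) + ∫ u in (0:ℝ)..t₀, gq u := by
    intro ε hε
    set N : ℝ → ℝ := fun τ => Real.exp (2*ν*τ) * E τ + ε with hNdef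
    set W : ℝ → ℝ := fun τ => Real.sqrt (N τ) with hWdef
    have hNpos : ∀ τ, 0 < N τ :=
      fun τ => add_pos_of_nonneg_of_pos (mul_nonneg (Real.exp_pos _).le (hEnn τ)) hε
    have hNd : ∀ x ∈ s, HasDerivWithinAt N
        (Real.exp (2*ν*x) * (2*ν) * E x + Real.exp (2*ν*x) * D x) s x := by
      intro x hx
      have h1 : HasDerivAt (fun τ => Real.exp (2*ν*τ)) (Real.exp (2*ν*x) * (2*ν)) x := by
        simpa using (((hasDerivAt_id x).const_mul (2*ν)).exp)
      exact ((h1.hasDerivWithinAt.mul (hED x hx)).add_const ε)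
    have hWd : ∀ x ∈ s, HasDerivWithinAt W
        ((Real.exp (2*ν*x) * (2*ν) * E x + Real.exp (2*ν*x) * D x) / (2 * Real.sqrt (N x)))
        s x := fun x hx => (hNd x hx).sqrt (ne_of_gt (hNpos x))
    have hsqrtN : ∀ x, Real.exp (ν*x) * Real.sqrt (E x) ≤ Real.sqrt (N x) := by
      intro x
      have he : Real.exp (2*ν*x) = (Real.exp (ν*x))^2 := by
        rw [sq, ← Real.exp_add]; ring_nf
      have h1 : Real.exp (2*ν*x) * E x ≤ N x := le_add_of_nonneg_right hε.le
      calc Real.exp (ν*x) * Real.sqrt (E x)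
          = Real.sqrt (Real.exp (2*ν*x) * E x) := by
            rw [he, Real.sqrt_mul (sq_nonneg _), Real.sqrt_sq (Real.exp_pos _).le]
        _ ≤ Real.sqrt (N x) := Real.sqrt_le_sqrt h1
    have hWbound : ∀ x ∈ s,
        (Real.exp (2*ν*x) * (2*ν) * E x + Real.exp (2*ν*x) * D x) / (2 * Real.sqrt (N x))
          ≤ gq x := by
      intro x hx
      have hD := hDbound x hx
      have hexp : (0:ℝ) < Real.exp (2*ν*x) := Real.exp_pos _
      have he : Real.exp (2*ν*x) = (Real.exp (ν*x))^2 := by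
        rw [sq, ← Real.exp_add]; ring_nf
      rw [div_le_iff₀ (mul_pos two_pos (Real.sqrt_pos.2 (hNpos x)))]
      have e1 : Real.exp (2*ν*x) * (2*ν) * E x + Real.exp (2*ν*x) * D x
          ≤ 2 * (Real.exp (2*ν*x) * (Real.sqrt (E x) * Real.sqrt (Fq x))) := by
        nlinarith
      refine e1.trans ?_
      have h2 := hsqrtN x
      have hsF : (0:ℝ) ≤ Real.sqrt (Fq x) := Real.sqrt_nonneg _
      have hsE : (0:ℝ) ≤ Real.sqrt (E x) := Real.sqrt_nonneg _
      have hexp' : (0:ℝ) < Real.exp (ν*x) := Real.exp_pos _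
      have : 2 * (Real.exp (2*ν*x) * (Real.sqrt (E x) * Real.sqrt (Fq x)))
          = (2 * Real.exp (ν*x) * Real.sqrt (Fq x)) * (Real.exp (ν*x) * Real.sqrt (E x)) := by
        rw [he]; ring
      rw [this]
      have h3 : (2 * Real.exp (ν*x) * Real.sqrt (Fq x)) * (Real.exp (ν*x) * Real.sqrt (E x))
          ≤ (2 * Real.exp (ν*x) * Real.sqrt (Fq x)) * Real.sqrt (N x) := by
        apply mul_le_mul_of_nonneg_left h2 (by positivity)
      refine h3.trans_eq ?_
      rw [hgdef]; ring
    -- boundary function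
    set B : ℝ → ℝ := fun τ => Real.sqrt (E 0 + ε) + ∫ u in (0:ℝ)..τ, gq u with hBdef
    have hNcont : ContinuousOn N (Icc 0 t₀) :=
      (((Real.continuous_exp.comp (continuous_const.mul continuous_id)).continuousOn).mul
        (hEcont.mono hIccs)).add continuousOn_const
    have hWcont : ContinuousOn W (Icc 0 t₀) := hNcont.sqrt
    have hBcont : ContinuousOn B (Icc 0 t₀) := by
      refine continuousOn_const.add ?_
      have hint : MeasureTheory.IntegrableOn gq (Set.uIcc 0 t₀) := by
        rw [Set.uIcc_of_le ht₀0]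
        exact (hgcont.mono hIccs).integrableOn_Icc
      have := intervalIntegral.continuousOn_primitive_interval hint
      rwa [Set.uIcc_of_le ht₀0] at this
    have hW0 : W 0 ≤ B 0 := by
      simp only [hWdef, hNdef, hBdef, intervalIntegral.integral_same, mul_zero,
        Real.exp_zero, one_mul, add_zero]
      exact le_refl _
    have hWd' : ∀ x ∈ Ico (0:ℝ) t₀, HasDerivWithinAt W
        ((Real.exp (2*ν*x) * (2*ν) * E x + Real.exp (2*ν*x) * D x) / (2 * Real.sqrt (N x)))
        (Ici x) x :=
      fun x hx => (hWd x (hIccs (Ico_subset_Icc_self hx))).mono_of_mem_nhdsWithin (hnhds x hx)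
    have hBd' : ∀ x ∈ Ico (0:ℝ) t₀, HasDerivWithinAt B (gq x) (Ici x) x := by
      intro x hx
      have hxs : x ∈ s := hIccs (Ico_subset_Icc_self hx)
      have hint : IntervalIntegrable gq MeasureTheory.volume 0 x := by
        apply ContinuousOn.intervalIntegrable
        rw [Set.uIcc_of_le hx.1]
        exact hgcont.mono fun τ hτ => hIccs ⟨hτ.1, le_trans hτ.2 (le_of_lt hx.2)⟩
      have hIoos : Ioo x b ⊆ s := fun τ hτ => hIcobs x hx ⟨le_of_lt hτ.1, hτ.2⟩
      have hmeas : StronglyMeasurableAtFilter gq (𝓝[Ioi x] x) MeasureTheory.volume := by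
        refine ⟨Ioo x b, ?_, ?_⟩
        · refine mem_nhdsWithin.2 ⟨Iio b, isOpen_Iio, lt_trans hx.2 ht₀b, ?_⟩
          rintro τ ⟨hτ1, hτ2⟩
          exact ⟨hτ2, hτ1⟩
        · exact (hgcont.mono hIoos).aestronglyMeasurable measurableSet_Ioo
      have hcw : ContinuousWithinAt gq (Ioi x) x :=
        (hgcont x hxs).mono_of_mem_nhdsWithin (hnhds' x hx)
      exact (intervalIntegral.integral_hasDerivWithinAt_right hint hmeas hcw).const_add _
    have hboundIco : ∀ x ∈ Ico (0:ℝ) t₀,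
        (Real.exp (2*ν*x) * (2*ν) * E x + Real.exp (2*ν*x) * D x) / (2 * Real.sqrt (N x))
          ≤ gq x := fun x hx => hWbound x (hIccs (Ico_subset_Icc_self hx))
    have happ := image_le_of_deriv_right_le_deriv_boundary hWcont hWd' hW0 hBcont hBd' hboundIco
    have hfinal := happ (right_mem_Icc.2 ht₀0)
    calc Real.exp (ν * t₀) * Real.sqrt (E t₀) ≤ Real.sqrt (N t₀) := hsqrtN t₀
      _ = W t₀ := rfl
      _ ≤ B t₀ := hfinal
      _ = Real.sqrt (E 0 + ε) + ∫ u in (0:ℝ)..t₀, gq u := rfl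
  -- pass to the limit ε → 0
  have key : Real.exp (ν * t₀) * Real.sqrt (E t₀) ≤
      Real.sqrt (E 0) + ∫ u in (0:ℝ)..t₀, gq u := by
    refine le_of_forall_pos_le_add ?_
    intro δ hδ
    have h1 := main (δ^2) (by positivity)
    have h2 : Real.sqrt (E 0 + δ^2) ≤ Real.sqrt (E 0) + δ := by
      have hsq : (Real.sqrt (E 0) + δ)^2 = E 0 + 2*Real.sqrt (E 0)*δ + δ^2 := by
        have := Real.sq_sqrt (hEnn 0)
        nlinarith
      have : E 0 + δ^2 ≤ (Real.sqrt (E 0) + δ)^2 := by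
        rw [hsq]
        nlinarith [Real.sqrt_nonneg (E 0), hδ.le]
      calc Real.sqrt (E 0 + δ^2) ≤ Real.sqrt ((Real.sqrt (E 0) + δ)^2) :=
            Real.sqrt_le_sqrt this
        _ = Real.sqrt (E 0) + δ := Real.sqrt_sq (by positivity)
    linarith
  -- conclude
  have hexp1 : Real.exp (ν * t₀) * Real.exp (-ν * t₀) = 1 := by
    rw [← Real.exp_add]
    ring_nf
    exact Real.exp_zero
  have hconc : Real.sqrt (E t₀) ≤
      (Real.sqrt (E 0) + ∫ u in (0:ℝ)..t₀, gq u) * Real.exp (-ν * t₀) := by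
    have := mul_le_mul_of_nonneg_right key (Real.exp_pos (-ν * t₀)).le
    calc Real.sqrt (E t₀)
        = Real.exp (ν * t₀) * Real.sqrt (E t₀) * Real.exp (-ν * t₀) := by
          rw [mul_comm (Real.exp (ν * t₀)) (Real.sqrt (E t₀)), mul_assoc, hexp1, mul_one]
      _ ≤ (Real.sqrt (E 0) + ∫ u in (0:ℝ)..t₀, gq u) * Real.exp (-ν * t₀) := this
  exact hconc
end
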